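/- arXiv:2603.23193 — 4 statements merged into one kernel-verified Lean document; each statement's English description precedes it below -/
import Mathlib

section
/- Let D be an oriented tree, i.e., a digraph with no 2-cycle whose underlying undirected graph is a tree. Then the set Ext(D) of extremal vertices of D is a minimum geodetic set of D. -/
namespace GeoPaper

variable {V : Type*}

/-- A directed walk from `u` to `v` in the digraph with arc relation `D`,
represented by the list of its vertices. -/
def IsWalk (D : V → V → Prop) (u v : V) (p : List V) : Prop :=
  p.Chain' D ∧ p.head? = some u ∧ p.getLast? = some v

/-- `interval D u v` is the set of vertices lying on some shortest directed
path from `u` to `v` (i.e. a directed walk of minimum length from `u` to `v`). -/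
def interval (D : V → V → Prop) (u v : V) : Set V :=
  {x | ∃ p, IsWalk D u v p ∧ (∀ q, IsWalk D u v q → p.length ≤ q.length) ∧ x ∈ p}

/-- `S` is a geodetic set of the digraph `D`: every vertex lies on a shortest
directed path between two vertices of `S`. -/
def IsGeodetic (D : V → V → Prop) (S : Set V) : Prop :=
  ∀ x, ∃ u ∈ S, ∃ v ∈ S, x ∈ interval D u v

/-- `S` is a geodetic set of minimum cardinality. -/
def IsMinGeodetic (D : V → V → Prop) (S : Set V) : Prop :=
  IsGeodetic D S ∧ ∀ T : Set V, IsGeodetic D T → S.ncard ≤ T.ncard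

/-- a source: no incoming arcs. -/
def IsSource (D : V → V → Prop) (v : V) : Prop := ∀ u, ¬ D u v

/-- a sink: no outgoing arcs. -/
def IsSink (D : V → V → Prop) (v : V) : Prop := ∀ u, ¬ D v u

/-- an extremal vertex: a source or a sink. -/
def Extremal (D : V → V → Prop) (v : V) : Prop := IsSource D v ∨ IsSink D v

/-- the digraph `D` has no directed 2-cycle (an oriented graph). -/
def NoTwoCycle (D : V → V → Prop) : Prop := ∀ u v, D u v → ¬ D v u

/-- the underlying undirected simple graph of a digraph. -/
def underlying (D : V → V → Prop) : SimpleGraph V where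
  Adj u v := u ≠ v ∧ (D u v ∨ D v u)
  symm := by constructor; intro u v h; exact ⟨h.1.symm, h.2.symm⟩
  loopless := by constructor; intro v h; exact h.1 rfl

/-- a leaf: a vertex of degree 1 in the underlying undirected graph. -/
def IsLeaf (D : V → V → Prop) (v : V) : Prop := ((underlying D).neighborSet v).ncard = 1

/-- a ditree: a digraph whose underlying undirected graph is a tree. -/
def IsDitree (D : V → V → Prop) : Prop := (∀ v, ¬ D v v) ∧ (underlying D).IsTree

/-- reachability by directed paths. -/
def Reach (D : V → V → Prop) : V → V → Prop := Relation.ReflTransGen D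

/-- `S` is a maximal strongly connected component of `D`. -/
def IsSCC (D : V → V → Prop) (S : Set V) : Prop :=
  S.Nonempty ∧ (∀ u ∈ S, ∀ v ∈ S, Reach D u v) ∧
    ∀ T : Set V, S ⊆ T → (∀ u ∈ T, ∀ v ∈ T, Reach D u v) → T ⊆ S

/-- a source set: a maximal strongly connected component no arc enters from outside. -/
def IsSourceSet (D : V → V → Prop) (S : Set V) : Prop :=
  IsSCC D S ∧ ∀ u v, v ∈ S → D u v → u ∈ S

/-- a sink set: a maximal strongly connected component no arc leaves. -/
def IsSinkSet (D : V → V → Prop) (S : Set V) : Prop :=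
  IsSCC D S ∧ ∀ u v, u ∈ S → D u v → v ∈ S

/-- a transitive vertex. -/
def IsTransitiveVertex (D : V → V → Prop) (v : V) : Prop :=
  ∀ u1 u2, D u1 v → D v u2 → D u1 u2 ∨ u1 = u2



theorem ML (D : V → V → Prop) (hor : NoTwoCycle D) (htree : (underlying D).IsTree) :
    ∀ (p : List V) (u v : V), p.Chain' D → p.head? = some u → p.getLast? = some v →
      ∃ P : (underlying D).Walk u v, P.IsPath ∧ P.support = p
  | [], u, v, _, hh, _ => by simp at hh
  | [a], u, v, _, hh, hl => by
      simp at hh hl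
      subst hh; subst hl
      exact ⟨SimpleGraph.Walk.nil, SimpleGraph.Walk.IsPath.nil, by simp⟩
  | a :: b :: rest, u, v, hc, hh, hl => by
      simp only [List.head?_cons, Option.some.injEq] at hh
      subst hh
      haveI := Classical.decEq V
      simp only [List.Chain', List.isChain_cons_cons] at hc
      obtain ⟨hab, hc'⟩ := hc
      have hl' : (b :: rest).getLast? = some v := by
        rwa [List.getLast?_cons_cons] at hl
      obtain ⟨P', hP'path, hP'supp⟩ := ML D hor htree (b :: rest) b v hc' rfl hl'
      have hne : a ≠ b := by rintro rfl; exact hor a a hab hab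
      have hadj : (underlying D).Adj a b := ⟨hne, Or.inl hab⟩
      have hnot : a ∉ P'.support := by
        intro ha
        set Q := P'.takeUntil a ha with hQ
        have hQpath : Q.IsPath := hP'path.takeUntil ha
        have huniq := SimpleGraph.isAcyclic_iff_path_unique.mp htree.IsAcyclic
          ⟨Q, hQpath⟩ (SimpleGraph.Path.singleton hadj.symm)
        have hQsupp : Q.support = [b, a] := by
          have : Q = (SimpleGraph.Path.singleton hadj.symm : (underlying D).Path b a) :=
            congrArg Subtype.val huniq
          rw [this]
          simp [SimpleGraph.Path.singleton]
        have hspec := P'.take_spec ha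
        have : ([b, a] ++ (P'.dropUntil a ha).support.tail) = b :: rest := by
          rw [← hQsupp, ← SimpleGraph.Walk.support_append, hspec, hP'supp]
        simp only [List.cons_append, List.nil_append, List.cons.injEq] at this
        obtain ⟨-, hrest⟩ := this
        rw [← hrest, List.isChain_cons_cons] at hc'
        exact hor a b hab hc'.1
      exact ⟨SimpleGraph.Walk.cons hadj P', hP'path.cons hnot, by simp [hP'supp]⟩

theorem walk_eq (D : V → V → Prop) (hor : NoTwoCycle D) (htree : (underlying D).IsTree)
    {u v : V} {p q : List V} (hp : IsWalk D u v p) (hq : IsWalk D u v q) : p = q := by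
  obtain ⟨P, hPp, hPs⟩ := ML D hor htree p u v hp.1 hp.2.1 hp.2.2
  obtain ⟨Q, hQp, hQs⟩ := ML D hor htree q u v hq.1 hq.2.1 hq.2.2
  have h1 := SimpleGraph.isAcyclic_iff_path_unique.mp htree.IsAcyclic ⟨P, hPp⟩ ⟨Q, hQp⟩
  have h2 : P = Q := congrArg Subtype.val h1
  rw [← hPs, ← hQs, h2]

theorem walk_nodup (D : V → V → Prop) (hor : NoTwoCycle D) (htree : (underlying D).IsTree)
    {u v : V} {p : List V} (hp : IsWalk D u v p) : p.Nodup := by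
  obtain ⟨P, hPp, hPs⟩ := ML D hor htree p u v hp.1 hp.2.1 hp.2.2
  rw [← hPs]
  exact hPp.support_nodup

theorem to_source [Fintype V] (D : V → V → Prop) (hor : NoTwoCycle D)
    (htree : (underlying D).IsTree) :
    ∀ (k : ℕ) (p : List V) (x : V), p.Chain' D → p.getLast? = some x →
      Fintype.card V + 1 ≤ p.length + k →
      ∃ u q, IsSource D u ∧ IsWalk D u x q ∧ x ∈ q := by
  intro k
  induction k with
  | zero =>
    intro p x hc hl hk
    exfalso
    have hne : p ≠ [] := by rintro rfl; simp at hl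
    have hnd : p.Nodup :=
      walk_nodup D hor htree (u := p.head hne) ⟨hc, List.head?_eq_head hne, hl⟩
    have := hnd.length_le_card
    omega
  | succ k ih =>
    intro p x hc hl hk
    have hne : p ≠ [] := by rintro rfl; simp at hl
    by_cases hs : IsSource D (p.head hne)
    · exact ⟨p.head hne, p, hs, ⟨hc, List.head?_eq_head hne, hl⟩,
        by obtain ⟨ys, rfl⟩ := List.getLast?_eq_some_iff.mp hl; simp⟩
    · simp only [IsSource, not_forall, not_not] at hs
      obtain ⟨z, hz⟩ := hs
      have hc' : (z :: p).Chain' D := by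
        simp only [List.Chain', List.isChain_cons]
        refine ⟨?_, hc⟩
        intro y hy
        rw [List.head?_eq_head hne] at hy
        simp only [Option.mem_def, Option.some.injEq] at hy
        rw [← hy]
        exact hz
      have hl' : (z :: p).getLast? = some x := by
        obtain ⟨h0, t, rfl⟩ := List.exists_cons_of_ne_nil hne
        rwa [List.getLast?_cons_cons]
      apply ih (z :: p) x hc' hl'
      simp only [List.length_cons]
      omega

theorem source_walk [Fintype V] (D : V → V → Prop) (hor : NoTwoCycle D)
    (htree : (underlying D).IsTree) (x : V) :
    ∃ u q, IsSource D u ∧ IsWalk D u x q ∧ x ∈ q :=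
  to_source D hor htree (Fintype.card V) [x] x (List.isChain_singleton _) (by simp)
    (by simp only [List.length_singleton]; omega)

theorem underlying_flip (D : V → V → Prop) :
    underlying (fun a b => D b a) = underlying D := by
  ext u v
  constructor <;> rintro ⟨h1, h2⟩ <;> exact ⟨h1, h2.symm⟩

theorem sink_walk [Fintype V] (D : V → V → Prop) (hor : NoTwoCycle D)
    (htree : (underlying D).IsTree) (x : V) :
    ∃ v q, IsSink D v ∧ IsWalk D x v q ∧ x ∈ q := by
  have hor' : NoTwoCycle (fun a b => D b a) := fun u v h h' => hor v u h h'
  have htree' : (underlying fun a b => D b a).IsTree := by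
    rw [underlying_flip]; exact htree
  obtain ⟨v, q, hv, hq, hxq⟩ := source_walk (fun a b => D b a) hor' htree' x
  refine ⟨v, q.reverse, hv, ⟨?_, ?_, ?_⟩, by simpa using hxq⟩
  · exact List.isChain_reverse.mpr hq.1
  · rw [List.head?_reverse]; exact hq.2.2
  · rw [List.getLast?_reverse]; exact hq.2.1

theorem geodetic_extremal [Fintype V] (D : V → V → Prop) (hor : NoTwoCycle D)
    (htree : (underlying D).IsTree) : IsGeodetic D {v | Extremal D v} := by
  intro x
  obtain ⟨u, p, hu, hp, hxp⟩ := source_walk D hor htree x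
  obtain ⟨v, q, hv, hq, -⟩ := sink_walk D hor htree x
  refine ⟨u, Or.inl hu, v, Or.inr hv, ?_⟩
  have hpne : p ≠ [] := by rintro rfl; simp at hxp
  obtain ⟨q0, t, rfl⟩ : ∃ q0 t, q = q0 :: t := by
    rcases q with _ | ⟨q0, t⟩
    · simp [IsWalk] at hq
    · exact ⟨q0, t, rfl⟩
  have hq0 : x = q0 := by
    have := hq.2.1; simp only [List.head?_cons, Option.some.injEq] at this
    exact this.symm
  subst hq0
  have hchain : (p ++ t).Chain' D := by
    apply List.IsChain.append hp.1 ((List.isChain_cons.mp hq.1).2)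
    intro y hy z hz
    have hyx : y = x := by
      rw [hp.2.2] at hy
      simpa using hy.symm
    subst hyx
    exact (List.isChain_cons.mp hq.1).1 z hz
  have hhead2 : (p ++ t).head? = some u := by
    rw [List.head?_append_of_ne_nil p hpne]; exact hp.2.1
  have hlast : (p ++ t).getLast? = some v := by
    rcases t with _ | ⟨t0, tt⟩
    · have : v = x := by
        have := hq.2.2; simp at this; exact this.symm
      subst this
      simpa using hp.2.2
    · rw [List.getLast?_append_of_ne_nil p (by simp)]
      have := hq.2.2
      rwa [List.getLast?_cons_cons] at this
  have hw : IsWalk D u v (p ++ t) := ⟨hchain, hhead2, hlast⟩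
  refine ⟨p ++ t, hw, ?_, by simp [hxp]⟩
  intro q' hq'
  exact le_of_eq (congrArg List.length (walk_eq D hor htree hw hq'))

theorem pred_of_mem_tail (D : V → V → Prop) :
    ∀ (p : List V), p.Chain' D → ∀ w ∈ p.tail, ∃ z, D z w := by
  intro p
  induction p with
  | nil => simp
  | cons c t ih =>
    intro hc w hw
    simp only [List.tail_cons] at hw
    cases t with
    | nil => simp at hw
    | cons d t' =>
      simp only [List.Chain', List.isChain_cons_cons] at hc
      rcases List.mem_cons.mp hw with rfl | hw'
      · exact ⟨c, hc.1⟩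
      · exact ih hc.2 w hw'

theorem succ_of_mem_dropLast (D : V → V → Prop) :
    ∀ (p : List V), p.Chain' D → ∀ w ∈ p.dropLast, ∃ z, D w z := by
  intro p
  induction p with
  | nil => simp
  | cons c t ih =>
    intro hc w hw
    cases t with
    | nil => simp at hw
    | cons d t' =>
      simp only [List.Chain', List.isChain_cons_cons] at hc
      have hdl : (c :: d :: t').dropLast = c :: (d :: t').dropLast := rfl
      rw [hdl] at hw
      rcases List.mem_cons.mp hw with rfl | hw'
      · exact ⟨d, hc.1⟩
      · exact ih hc.2 w hw'

theorem extremal_subset (D : V → V → Prop) {T : Set V} (hT : IsGeodetic D T) :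
    {v | Extremal D v} ⊆ T := by
  intro w hw
  obtain ⟨a, ha, b, hb, p, hwalk, -, hmem⟩ := hT w
  rcases hw with hsrc | hsink
  · have hpne : p ≠ [] := by rintro rfl; simp at hmem
    obtain ⟨h0, t, rfl⟩ := List.exists_cons_of_ne_nil hpne
    have h0a : h0 = a := by
      have := hwalk.2.1; simpa using this
    rcases List.mem_cons.mp hmem with rfl | hmem'
    · rw [h0a]; exact ha
    · exfalso
      obtain ⟨z, hz⟩ := pred_of_mem_tail D _ hwalk.1 w (by simpa using hmem')
      exact hsrc z hz
  · have hpne : p ≠ [] := by rintro rfl; simp at hmem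
    have hsplit : p.dropLast ++ [p.getLast hpne] = p := List.dropLast_append_getLast hpne
    have hgb : p.getLast hpne = b := by
      have h1 := hwalk.2.2
      rw [List.getLast?_eq_getLast hpne] at h1
      simpa using h1
    rw [← hsplit] at hmem
    rcases List.mem_append.mp hmem with h1 | h2
    · exfalso
      obtain ⟨z, hz⟩ := succ_of_mem_dropLast D _ hwalk.1 w h1
      exact hsink z hz
    · simp only [List.mem_singleton] at h2
      rw [h2, hgb]
      exact hb

theorem extremal_isMinGeodetic_of_orientedTree' [Fintype V] (D : V → V → Prop)
    (hor : NoTwoCycle D) (htree : (underlying D).IsTree) :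
    IsMinGeodetic D {v | Extremal D v} := by
  constructor
  · exact geodetic_extremal D hor htree
  · intro T hT
    exact Set.ncard_le_ncard (extremal_subset D hT) (Set.toFinite T)

/-- In an oriented tree `D` (a digraph with no 2-cycle whose
underlying undirected graph is a tree), the set of extremal vertices of `D` is
a minimum geodetic set of `D`. -/
theorem extremal_isMinGeodetic_of_orientedTree [Fintype V] (D : V → V → Prop)
    (hor : NoTwoCycle D) (htree : (underlying D).IsTree) :
    IsMinGeodetic D {v | Extremal D v} := by
  exact extremal_isMinGeodetic_of_orientedTree' D hor htree


end GeoPaper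
end

section
/- Let T be a ditree and let S be a source set or a sink set of T. Then every geodetic set of T contains at least one vertex of S. -/
namespace GeoPaper

variable {V : Type*}

/-- If `S` is closed under taking in-neighbors and a `D`-chain meets `S`,
then its head is in `S`. -/
lemma head_mem_of_closed {D : V → V → Prop} {S : Set V}
    (hS : ∀ u v, v ∈ S → D u v → u ∈ S) :
    ∀ {p : List V}, p.Chain' D → ∀ {x}, x ∈ p → x ∈ S →
      ∀ {u}, p.head? = some u → u ∈ S := by
  intro p
  induction p with
  | nil => intro _ x hx; exact absurd hx List.not_mem_nil
  | cons a l ih =>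
    intro hc x hx hxS u hu
    obtain rfl : a = u := by simpa using hu
    rcases List.mem_cons.1 hx with rfl | hxl
    · exact hxS
    · obtain ⟨b, l', rfl⟩ : ∃ b l', l = b :: l' := by
        cases l with
        | nil => exact absurd hxl List.not_mem_nil
        | cons b l' => exact ⟨b, l', rfl⟩
      have hab : D a b := (List.isChain_cons_cons.1 hc).1
      have hb : b ∈ S := ih (List.isChain_cons_cons.1 hc).2 hxl hxS rfl
      exact hS a b hb hab

/-- Let `T` be a ditree and `S` a source set or a sink set of
`T`. Then every geodetic set of `T` contains at least one vertex of `S`. -/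
theorem geodetic_inter_sourceSet_or_sinkSet_nonempty (T : V → V → Prop)
    (hT : IsDitree T) (S : Set V) (hS : IsSourceSet T S ∨ IsSinkSet T S)
    (M : Set V) (hM : IsGeodetic T M) :
    (M ∩ S).Nonempty := by
  obtain ⟨x, hxS⟩ : S.Nonempty := by rcases hS with h | h <;> exact h.1.1
  obtain ⟨u, huM, v, hvM, p, ⟨hc, hu, hv⟩, _, hxp⟩ := hM x
  rcases hS with ⟨_, hsrc⟩ | ⟨_, hsnk⟩
  · exact ⟨u, huM, head_mem_of_closed hsrc hc hxp hxS hu⟩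
  · refine ⟨v, hvM, head_mem_of_closed (D := flip T)
      (fun a b hb hab => hsnk b a hb hab) ?_ (List.mem_reverse.2 hxp) hxS ?_⟩
    · exact (List.isChain_reverse).2 hc
    · rw [List.head?_reverse]; exact hv


end GeoPaper
end

section
/- Let T be a ditree in which every source set of size at least 2 contains a leaf and every sink set of size at least 2 contains a leaf. Let S be the set consisting of all source vertices, all sink vertices, and all leaves of T. Then S is a geodetic set of T of minimum size. -/
namespace GeoPaper

variable {V : Type*}

section ListInfra

variable {R : V → V → Prop}

lemma chain_shorten :
    ∀ (p : List V), p.Chain' R → ¬ p.Nodup →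
      ∃ q : List V, q.Chain' R ∧ q.length < p.length ∧ q.head? = p.head? ∧
        q.getLast? = p.getLast? ∧ ∀ a ∈ q, a ∈ p := by
  intro p
  induction p with
  | nil => intro _ h; exact absurd List.nodup_nil h
  | cons a l ih =>
    intro hc hnd
    by_cases ha : a ∈ l
    · obtain ⟨l₁, l₂, rfl⟩ := List.append_of_mem ha
      refine ⟨a :: l₂, hc.suffix ⟨a :: l₁, by simp⟩, by simp, rfl, ?_, ?_⟩
      · have : a :: (l₁ ++ a :: l₂) = (a :: l₁) ++ (a :: l₂) := by simp
        rw [this, List.getLast?_append_cons]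
      · intro b hb; rcases List.mem_cons.1 hb with rfl | hb
        · exact List.mem_cons_self
        · exact List.mem_cons_of_mem _ (by simp [hb])
    · have hl : ¬ l.Nodup := fun h => hnd (List.nodup_cons.2 ⟨ha, h⟩)
      have hlne : l ≠ [] := by rintro rfl; exact hl List.nodup_nil
      obtain ⟨q, hqc, hqlen, hqh, hql, hqm⟩ := ih hc.tail hl
      obtain ⟨c, l', rfl⟩ := List.exists_cons_of_ne_nil hlne
      have hqne : q ≠ [] := by
        intro h; subst h
        rw [List.getLast?_eq_getLast (l := c :: l') (by simp)] at hql
        simp at hql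
      obtain ⟨b, q', rfl⟩ := List.exists_cons_of_ne_nil hqne
      have hbc : b = c := by simpa using hqh
      subst hbc
      refine ⟨a :: b :: q', ?_, by simp at hqlen ⊢; omega, rfl, ?_, ?_⟩
      · exact List.isChain_cons_cons.2 ⟨(List.isChain_cons_cons.1 hc).1, hqc⟩
      · rw [List.getLast?_cons_cons, List.getLast?_cons_cons]; exact hql
      · intro d hd; rcases List.mem_cons.1 hd with rfl | hd
        · exact List.mem_cons_self
        · exact List.mem_cons_of_mem _ (hqm d hd)

lemma chain_dedup :
    ∀ (n : ℕ) (p : List V), p.length ≤ n → p.Chain' R →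
      ∃ q : List V, q.Chain' R ∧ q.Nodup ∧ q.head? = p.head? ∧ q.getLast? = p.getLast? ∧
        ∀ a ∈ q, a ∈ p := by
  intro n
  induction n with
  | zero =>
    intro p hp hc
    have : p = [] := List.length_eq_zero_iff.1 (Nat.le_zero.1 hp)
    subst this
    exact ⟨[], by simp [List.Chain'], by simp, rfl, rfl, by simp⟩
  | succ n ih =>
    intro p hp hc
    by_cases hnd : p.Nodup
    · exact ⟨p, hc, hnd, rfl, rfl, fun a ha => ha⟩
    · obtain ⟨q, h1, h2, h3, h4, h5⟩ := chain_shorten p hc hnd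
      obtain ⟨r, r1, r2, r3, r4, r5⟩ := ih q (by omega) h1
      exact ⟨r, r1, r2, r3.trans h3, r4.trans h4, fun a ha => h5 a (r5 a ha)⟩

lemma reach_chain {u v : V} (h : Relation.ReflTransGen R u v) :
    ∃ p : List V, p.Chain' R ∧ p.head? = some u ∧ p.getLast? = some v ∧
      ∀ a ∈ p, a = u ∨ ∃ b, R b a := by
  induction h with
  | refl => exact ⟨[u], by simp [List.Chain'], rfl, rfl, by simp⟩
  | @tail b c hab hbc ih =>
    obtain ⟨p, hc, hh, hl, hm⟩ := ih
    have hpne : p ≠ [] := by intro h; subst h; simp at hh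
    refine ⟨p ++ [c], ?_, ?_, ?_, ?_⟩
    · refine List.isChain_append.2 ⟨hc, by simp, ?_⟩
      intro x hx y hy
      simp only [List.head?_cons, Option.mem_def, Option.some_inj] at hy
      rw [hl] at hx
      simp only [Option.mem_def, Option.some_inj] at hx
      subst hx; subst hy; exact hbc
    · rw [List.head?_append_of_ne_nil _ hpne]; exact hh
    · simp [List.getLast?_concat]
    · intro a ha
      rcases List.mem_append.1 ha with ha | ha
      · exact hm a ha
      · simp only [List.mem_singleton] at ha
        subst ha; exact Or.inr ⟨b, hbc⟩

lemma chain_mem_reach_last :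
    ∀ {l : List V}, l.Chain' R → ∀ {z : V}, l.getLast? = some z →
      ∀ a ∈ l, Relation.ReflTransGen R a z := by
  intro l
  induction l with
  | nil => simp
  | cons b t ih =>
    intro hc z hz a ha
    cases t with
    | nil =>
      simp only [List.getLast?_singleton, Option.some_inj] at hz
      simp only [List.mem_singleton] at ha
      subst hz; subst ha; exact Relation.ReflTransGen.refl
    | cons c t' =>
      rw [List.getLast?_cons_cons] at hz
      rcases List.mem_cons.1 ha with rfl | ha
      · exact Relation.ReflTransGen.head (List.isChain_cons_cons.1 hc).1
          (ih (List.isChain_cons_cons.1 hc).2 hz c (by simp))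
      · exact ih (List.isChain_cons_cons.1 hc).2 hz a ha

lemma chain_head_reach :
    ∀ {l : List V}, l.Chain' R → ∀ {u : V}, l.head? = some u →
      ∀ a ∈ l, Relation.ReflTransGen R u a := by
  intro l
  induction l with
  | nil => simp
  | cons b t ih =>
    intro hc u hh a ha
    have hbu : b = u := by simpa using hh
    subst hbu
    rcases List.mem_cons.1 ha with rfl | ha
    · exact Relation.ReflTransGen.refl
    · cases t with
      | nil => simp at ha
      | cons c t' =>
        exact Relation.ReflTransGen.head (List.isChain_cons_cons.1 hc).1
          (ih (List.isChain_cons_cons.1 hc).2 rfl a ha)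

end ListInfra

section WalkBridge

variable {G : SimpleGraph V}

lemma exists_walk_of_chain :
    ∀ (p : List V) (u v : V), p.Chain' G.Adj → p.head? = some u → p.getLast? = some v →
      ∃ w : G.Walk u v, w.support = p := by
  intro p
  induction p with
  | nil => intro u v _ h _; simp at h
  | cons a l ih =>
    intro u v hc hh hl
    have hau : a = u := by simpa using hh
    subst hau
    cases l with
    | nil =>
      have : a = v := by simpa using hl
      subst this
      exact ⟨SimpleGraph.Walk.nil, rfl⟩
    | cons b t =>
      rw [List.getLast?_cons_cons] at hl
      obtain ⟨w, hw⟩ := ih b v (List.isChain_cons_cons.1 hc).2 rfl hl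
      exact ⟨SimpleGraph.Walk.cons (List.isChain_cons_cons.1 hc).1 w, by simp [hw]⟩

lemma chain_path_unique (hac : G.IsAcyclic) {p q : List V} {u v : V}
    (hpc : p.Chain' G.Adj) (hpn : p.Nodup) (hph : p.head? = some u) (hpl : p.getLast? = some v)
    (hqc : q.Chain' G.Adj) (hqn : q.Nodup) (hqh : q.head? = some u) (hql : q.getLast? = some v) :
    p = q := by
  obtain ⟨w1, hw1⟩ := exists_walk_of_chain p u v hpc hph hpl
  obtain ⟨w2, hw2⟩ := exists_walk_of_chain q u v hqc hqh hql
  have h1 : w1.IsPath := (SimpleGraph.Walk.isPath_def _).2 (hw1.symm ▸ hpn)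
  have h2 : w2.IsPath := (SimpleGraph.Walk.isPath_def _).2 (hw2.symm ▸ hqn)
  have := hac.path_unique ⟨w1, h1⟩ ⟨w2, h2⟩
  have hww : w1 = w2 := Subtype.ext_iff.1 this
  rw [← hw1, ← hw2, hww]

end WalkBridge

section MinWalk

variable {T : V → V → Prop}

lemma chainT_to_adj (hirr : ∀ v, ¬ T v v) {p : List V} (hc : p.Chain' T) :
    p.Chain' (underlying T).Adj :=
  hc.imp (fun a b (h : T a b) => ⟨fun he => hirr a (by rw [← he] at h; exact h), Or.inl h⟩)

lemma nodup_walk_min (hT : IsDitree T) {u v : V} {L : List V}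
    (hLc : L.Chain' T) (hLn : L.Nodup) (hLh : L.head? = some u) (hLl : L.getLast? = some v) :
    ∀ q, IsWalk T u v q → L.length ≤ q.length := by
  have key : ∀ (n : ℕ) (q : List V), q.length ≤ n → IsWalk T u v q → L.length ≤ q.length := by
    intro n
    induction n with
    | zero =>
      intro q hq hw
      have : q = [] := List.length_eq_zero_iff.1 (Nat.le_zero.1 hq)
      subst this
      simp [IsWalk] at hw
    | succ n ih =>
      intro q hq hw
      by_cases hnd : q.Nodup
      · have : L = q := chain_path_unique hT.2.IsAcyclic (chainT_to_adj hT.1 hLc) hLn hLh hLl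
          (chainT_to_adj hT.1 hw.1) hnd hw.2.1 hw.2.2
        exact this ▸ le_refl _
      · obtain ⟨q', h1, h2, h3, h4, _⟩ := chain_shorten q hw.1 hnd
        have hw' : IsWalk T u v q' := ⟨h1, h3.trans hw.2.1, h4.trans hw.2.2⟩
        exact le_trans (ih q' (by omega) hw') (le_of_lt h2)
  intro q hw
  exact key q.length q le_rfl hw

end MinWalk



section Branch

variable {T : V → V → Prop}

/-- the symmetric, `x`-avoiding adjacency relation. -/
def sxr (T : V → V → Prop) (x : V) : V → V → Prop :=
  fun a b => (T a b ∨ T b a) ∧ a ≠ x ∧ b ≠ x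

/-- the branch of the neighbour `p` of `x`: everything connected to `p` avoiding `x`. -/
def br (T : V → V → Prop) (x p : V) : Set V := {w | Relation.ReflTransGen (sxr T x) p w}

lemma sxr_symm (x : V) : Symmetric (sxr T x) := fun _ _ ⟨h, h1, h2⟩ => ⟨h.symm, h2, h1⟩

lemma mem_br_self {x p : V} : p ∈ br T x p := Relation.ReflTransGen.refl

lemma mem_br_ne {x p : V} (hp : p ≠ x) {w : V} (hw : w ∈ br T x p) : w ≠ x := by
  rcases Relation.ReflTransGen.cases_tail hw with h | ⟨c, _, hc⟩
  · rw [h]; exact hp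
  · exact hc.2.2

lemma br_step {x p w z : V} (hw : w ∈ br T x p) (hwz : T w z ∨ T z w)
    (h1 : w ≠ x) (h2 : z ≠ x) : z ∈ br T x p :=
  Relation.ReflTransGen.tail hw ⟨hwz, h1, h2⟩

lemma br_symm_reach {x p w : V} (hw : w ∈ br T x p) : Relation.ReflTransGen (sxr T x) w p :=
  by
  haveI : Std.Symm (sxr T x) := ⟨fun a b h => sxr_symm x h⟩
  exact Relation.ReflTransGen.symmetric.symm _ _ hw

lemma ne_x_of_adj (hT : IsDitree T) {p x : V} (hp : T p x ∨ T x p) : p ≠ x := by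
  intro h
  subst h
  exact hp.elim (hT.1 p) (hT.1 p)

lemma sxr_chain_to_adj (hT : IsDitree T) {l : List V} (hc : l.Chain' (sxr T x)) :
    l.Chain' (underlying T).Adj :=
  hc.imp (fun a b ⟨h, _, _⟩ => ⟨fun he => (he ▸ h).elim (hT.1 b) (hT.1 b), h⟩)

lemma br_disjoint (hT : IsDitree T) {x p q w : V} (hp : T p x ∨ T x p) (hq : T q x ∨ T x q)
    (hpq : p ≠ q) (h1 : w ∈ br T x p) (h2 : w ∈ br T x q) : False := by
  have hpx : p ≠ x := ne_x_of_adj hT hp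
  have hqx : q ≠ x := ne_x_of_adj hT hq
  have hreach : Relation.ReflTransGen (sxr T x) p q := h1.trans (br_symm_reach h2)
  obtain ⟨P, hPc, hPh, hPl, hPm⟩ := reach_chain hreach
  obtain ⟨Q, hQc, hQn, hQh, hQl, hQm⟩ := chain_dedup P.length P le_rfl hPc
  have hQx : ∀ a ∈ Q, a ≠ x := by
    intro a ha
    rcases hPm a (hQm a ha) with rfl | ⟨b, hb⟩
    · exact hpx
    · exact hb.2.2
  have hQadj : Q.Chain' (underlying T).Adj := sxr_chain_to_adj hT hQc
  have hLadj : ([p, x, q] : List V).Chain' (underlying T).Adj := by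
    refine List.isChain_cons_cons.2 ⟨⟨hpx, hp⟩, ?_⟩
    exact List.isChain_cons_cons.2 ⟨⟨Ne.symm hqx, hq.symm⟩, List.isChain_singleton _⟩
  have hLn : ([p, x, q] : List V).Nodup := by
    simp [hpx, hpq, Ne.symm hqx]
  have := chain_path_unique hT.2.IsAcyclic hQadj hQn (hQh.trans hPh) (hQl.trans hPl)
    hLadj hLn rfl (by simp) (p := Q) (q := [p, x, q]) (u := p) (v := q)
  have hx : x ∈ Q := by rw [this]; simp
  exact hQx x hx rfl

lemma br_nbr_unique (hT : IsDitree T) {x p w : V} (hp : T p x ∨ T x p) (hw : w ∈ br T x p)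
    (hwx : T w x ∨ T x w) : w = p := by
  by_contra hne
  exact br_disjoint hT hwx hp hne mem_br_self hw

lemma chainW_to_sxr {W : V → V → Prop} (hW : ∀ a b, W a b → T a b ∨ T b a) :
    ∀ {l : List V}, l.Chain' W → (∀ a ∈ l, a ≠ x) → l.Chain' (sxr T x) := by
  intro l
  induction l with
  | nil => intro _ _; simp [List.Chain']
  | cons a t ih =>
    intro hc hm
    refine List.isChain_cons.2 ⟨?_, ih hc.tail (fun b hb => hm b (List.mem_cons_of_mem _ hb))⟩
    intro y hy
    have hyt : y ∈ t := List.mem_of_mem_head? hy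
    exact ⟨hW _ _ ((List.isChain_cons.1 hc).1 y hy), hm a (by simp),
      hm y (List.mem_cons_of_mem _ hyt)⟩

lemma sxr_chain_subset_br {l : List V} {x p : V} (hc : l.Chain' (sxr T x))
    (hl : l.getLast? = some p) : ∀ w ∈ l, w ∈ br T x p := by
  intro w hw
  exact br_symm_reach (chain_mem_reach_last hc hl w hw)

lemma feed_mem_br (hT : IsDitree T) {P P' : List V} {p x : V}
    (hform : P = P' ++ [p, x]) (hc : P.Chain' T) (hn : P.Nodup) :
    ∀ w ∈ P, w ≠ x → w ∈ br T x p := by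
  subst hform
  have heq : P' ++ [p, x] = (P' ++ [p]) ++ [x] := by simp
  have hP0c : (P' ++ [p]).Chain' T := hc.prefix ⟨[x], by simp⟩
  have hxP0 : x ∉ P' ++ [p] := by
    rw [heq] at hn
    have := List.nodup_append.1 hn
    intro hx
    exact this.2.2 x hx x (by simp) rfl
  have hP0sxr : (P' ++ [p]).Chain' (sxr T x) :=
    chainW_to_sxr (fun a b h => Or.inl h) hP0c
      (fun a ha => fun he => hxP0 (he ▸ ha))
  have hP0l : (P' ++ [p]).getLast? = some p := by simp [List.getLast?_concat]
  intro w hw hwx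
  have hw0 : w ∈ P' ++ [p] := by
    rcases List.mem_append.1 hw with h | h
    · exact List.mem_append_left _ h
    · rcases List.mem_cons.1 h with rfl | h
      · exact List.mem_append_right _ (by simp)
      · simp only [List.mem_singleton] at h
        exact absurd h hwx
  exact sxr_chain_subset_br hP0sxr hP0l w hw0

end Branch



section LeafInBr

variable {T : V → V → Prop}

lemma underlying_adj {a b : V} : (underlying T).Adj a b ↔ a ≠ b ∧ (T a b ∨ T b a) := Iff.rfl

lemma tree_path_length (hT : (underlying T).IsTree) {a b : V} (w : (underlying T).Walk a b)
    (hw : w.IsPath) : w.length = (underlying T).dist a b := by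
  obtain ⟨q, hq, hl⟩ := (hT.isConnected.preconnected a b).exists_path_of_dist
  have := hT.IsAcyclic.path_unique ⟨w, hw⟩ ⟨q, hq⟩
  have hww : w = q := Subtype.ext_iff.1 this
  rw [hww]; exact hl

lemma exists_leaf_in_br [Fintype V] (hT : IsDitree T) {x p : V} (hp : T p x ∨ T x p) :
    ∃ w ∈ br T x p, IsLeaf T w := by
  classical
  set G := underlying T with hG
  have hpx : p ≠ x := ne_x_of_adj hT hp
  have hnbr_p : ∀ w ∈ br T x p, (T w x ∨ T x w) → w = p :=
    fun w hw hwx => br_nbr_unique hT hp hw hwx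
  by_cases hsing : ∀ w ∈ br T x p, w = p
  · refine ⟨p, mem_br_self, ?_⟩
    have hns : G.neighborSet p = {x} := by
      ext z
      simp only [SimpleGraph.mem_neighborSet, Set.mem_singleton_iff]
      constructor
      · intro hz
        by_contra hzx
        have hzbr : z ∈ br T x p := br_step mem_br_self hz.2 hpx hzx
        have hzp := hsing z hzbr
        exact hz.1 hzp.symm
      · rintro rfl
        exact ⟨hpx, hp⟩
    rw [IsLeaf, ← hG, hns]
    simp
  · push_neg at hsing
    obtain ⟨w₀, hw₀br, hw₀p⟩ := hsing
    obtain ⟨w, hwbr, hwmax⟩ := Set.exists_max_image (br T x p) (fun z => G.dist x z)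
      (Set.toFinite _) ⟨p, mem_br_self⟩
    have hconn := hT.2.isConnected
    have hwx : w ≠ x := mem_br_ne hpx hwbr
    have hdxp : G.dist x p = 1 := by
      rw [SimpleGraph.dist_eq_one_iff_adj]
      exact ((underlying_adj).2 ⟨Ne.symm hpx, hp.symm⟩)
    have hw₀x : w₀ ≠ x := mem_br_ne hpx hw₀br
    have hdw₀ : 2 ≤ G.dist x w₀ := by
      have h1 : G.dist x w₀ ≠ 0 := by
        intro h
        have := (SimpleGraph.dist_eq_zero_iff_eq_or_not_reachable (G := G)).1 h
        rcases this with h | h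
        · exact hw₀x h.symm
        · exact h (hconn.preconnected x w₀)
      have h2 : G.dist x w₀ ≠ 1 := by
        intro h
        have hadj := (SimpleGraph.dist_eq_one_iff_adj).1 h
        exact hw₀p (hnbr_p w₀ hw₀br hadj.2.symm)
      omega
    have hwnep : w ≠ p := by
      intro h
      have := hwmax w₀ hw₀br
      rw [h, hdxp] at this
      omega
    obtain ⟨pw, hpw, hpwlen⟩ := (hconn.preconnected w x).exists_path_of_dist
    cases pw with
    | nil => exact absurd rfl hwx
    | @cons _ y _ hadj rest =>
      have hrestpath : rest.IsPath ∧ w ∉ rest.support :=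
        (SimpleGraph.Walk.cons_isPath_iff _ _).1 hpw
      refine ⟨w, hwbr, ?_⟩
      have hns : G.neighborSet w = {y} := by
        ext z
        simp only [SimpleGraph.mem_neighborSet, Set.mem_singleton_iff]
        constructor
        · intro hz
          by_contra hzy
          have hzx : z ≠ x := by
            rintro rfl
            exact hwnep (hnbr_p w hwbr hz.2)
          have hzbr : z ∈ br T x p := br_step hwbr hz.2 hwx hzx
          have hzsup : z ∉ rest.support := by
            intro hzr
            have path1 : (SimpleGraph.Walk.cons hz SimpleGraph.Walk.nil).IsPath := by
              rw [SimpleGraph.Walk.cons_isPath_iff]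
              exact ⟨SimpleGraph.Walk.IsPath.nil, by simp [hz.1]⟩
            have path2 : (SimpleGraph.Walk.cons hadj (rest.takeUntil z hzr)).IsPath := by
              rw [SimpleGraph.Walk.cons_isPath_iff]
              refine ⟨hrestpath.1.takeUntil hzr, fun hws => hrestpath.2
                (SimpleGraph.Walk.support_takeUntil_subset _ hzr hws)⟩
            have := hT.2.IsAcyclic.path_unique
              ⟨SimpleGraph.Walk.cons hz SimpleGraph.Walk.nil, path1⟩
              ⟨SimpleGraph.Walk.cons hadj (rest.takeUntil z hzr), path2⟩
            have hsup := congrArg (fun (q : G.Path w z) => q.1.support) this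
            simp only [SimpleGraph.Walk.support_cons, SimpleGraph.Walk.support_nil] at hsup
            have := (rest.takeUntil z hzr).support_eq_cons
            rw [this] at hsup
            exact hzy (List.cons.inj (List.cons.inj hsup).2).1
          have hq : (SimpleGraph.Walk.cons (hz.symm) (SimpleGraph.Walk.cons hadj rest) :
              G.Walk z x).IsPath := by
            rw [SimpleGraph.Walk.cons_isPath_iff]
            refine ⟨hpw, ?_⟩
            rw [SimpleGraph.Walk.support_cons]
            intro hmem
            rcases List.mem_cons.1 hmem with h | h
            · exact hz.1 h.symm
            · exact hzsup h
          have hlen := tree_path_length hT.2 _ hq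
          have : G.dist z x = (SimpleGraph.Walk.cons hadj rest).length + 1 := by
            rw [← hlen]; simp
          have hle := hwmax z hzbr
          rw [SimpleGraph.dist_comm (u := x) (v := z), this] at hle
          rw [SimpleGraph.dist_comm (u := x) (v := w), ← hpwlen] at hle
          omega
        · rintro rfl
          exact hadj
      rw [IsLeaf, ← hG, hns]
      simp

end LeafInBr



section SourceReach

variable {T : V → V → Prop}

/-- the arc relation restricted to a vertex set `B`. -/
def rb (T : V → V → Prop) (B : Set V) : V → V → Prop := fun a b => T a b ∧ a ∈ B ∧ b ∈ B

lemma rb_mono {B : Set V} {a b : V} (h : Relation.ReflTransGen (rb T B) a b) :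
    Relation.ReflTransGen T a b := Relation.ReflTransGen.mono (r := rb T B) (p := T)
      (fun _ _ h => h.1 : ∀ x y, rb T B x y → T x y) a b h

lemma rb_mem_right {B : Set V} {a b : V} (hb : a ∈ B) (h : Relation.ReflTransGen (rb T B) a b) :
    b ∈ B := by
  rcases Relation.ReflTransGen.cases_tail h with h | ⟨c, _, hc⟩
  · rw [h]; exact hb
  · exact hc.2.2

lemma rb_mem_left {B : Set V} {a b : V} (hb : b ∈ B) (h : Relation.ReflTransGen (rb T B) a b) :
    a ∈ B := by
  rcases Relation.ReflTransGen.cases_head h with h | ⟨c, hc, _⟩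
  · rw [h]; exact hb
  · exact hc.2.1

lemma exists_source_reacher [Fintype V] (hT : IsDitree T)
    (hsrc : ∀ S : Set V, IsSourceSet T S → 2 ≤ S.ncard → ∃ v ∈ S, IsLeaf T v)
    (B : Set V) (t : V) (ht : t ∈ B) :
    (∃ ℓ, (IsSource T ℓ ∨ IsLeaf T ℓ) ∧ Relation.ReflTransGen (rb T B) ℓ t) ∨
    (∃ C : Set V, (∃ q w, w ∈ C ∧ q ∉ B ∧ T q w) ∧ C ⊆ B ∧
      (∀ c ∈ C, Relation.ReflTransGen (rb T B) c t) ∧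
      (∀ c ∈ C, ∀ c' ∈ C, Relation.ReflTransGen (rb T B) c c') ∧
      (∀ q w, w ∈ C → q ∈ B → T q w → q ∈ C) ∧
      (∀ w c, c ∈ C → Relation.ReflTransGen (rb T B) w c →
        Relation.ReflTransGen (rb T B) c w → w ∈ C)) := by
  classical
  set R := rb T B with hR
  obtain ⟨u, hu, hmin⟩ := Set.exists_min_image {w | Relation.ReflTransGen R w t}
    (fun w => {z | Relation.ReflTransGen R z w}.ncard) (Set.toFinite _)
    ⟨t, Relation.ReflTransGen.refl⟩
  have hu' : Relation.ReflTransGen R u t := hu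
  have huB : u ∈ B := rb_mem_left ht hu'
  set C : Set V := {w | Relation.ReflTransGen R w u ∧ Relation.ReflTransGen R u w} with hC
  have huC : u ∈ C := ⟨Relation.ReflTransGen.refl, Relation.ReflTransGen.refl⟩
  have hCB : C ⊆ B := fun w hw => rb_mem_right huB hw.2
  have hkey : ∀ q w, w ∈ C → q ∈ B → T q w → q ∈ C := by
    intro q w hw hqB hqw
    have hqw' : R q w := ⟨hqw, hqB, hCB hw⟩
    have h1 : Relation.ReflTransGen R q u := Relation.ReflTransGen.head hqw' hw.1
    have hqcand : q ∈ {w | Relation.ReflTransGen R w t} := h1.trans hu'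
    have hsub : {z | Relation.ReflTransGen R z q} ⊆ {z | Relation.ReflTransGen R z u} :=
      fun z hz => hz.trans h1
    have hle := hmin q hqcand
    have heq : {z | Relation.ReflTransGen R z q} = {z | Relation.ReflTransGen R z u} :=
      Set.eq_of_subset_of_ncard_le hsub hle (Set.toFinite _)
    have huq : Relation.ReflTransGen R u q := by
      have : u ∈ {z | Relation.ReflTransGen R z u} := Relation.ReflTransGen.refl
      rw [← heq] at this
      exact this
    exact ⟨h1, huq⟩
  by_cases hext : ∃ q w, w ∈ C ∧ q ∉ B ∧ T q w
  · right
    exact ⟨C, hext, hCB, (fun c hc => hc.1.trans hu'),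
      (fun c hc c' hc' => hc.1.trans hc'.2), hkey,
      (fun w c hc hwc hcw => ⟨hwc.trans hc.1, hc.2.trans hcw⟩)⟩
  · left
    push_neg at hext
    have hclose : ∀ q w, w ∈ C → T q w → q ∈ C := by
      intro q w hw hqw
      by_cases hqB : q ∈ B
      · exact hkey q w hw hqB hqw
      · exact absurd hqw (hext q w hw hqB)
    have hreach_close : ∀ w c, c ∈ C → Relation.ReflTransGen T w c → w ∈ C := by
      intro w c hc hwc
      induction hwc using Relation.ReflTransGen.head_induction_on with
      | refl => exact hc
      | head hab _ ih => exact hclose _ _ ih hab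
    have hSCC : IsSourceSet T C := by
      refine ⟨⟨⟨u, huC⟩, ?_, ?_⟩, fun q v hv hqv => hclose q v hv hqv⟩
      · intro a ha b hb
        exact Relation.ReflTransGen.trans (rb_mono ha.1) (rb_mono hb.2)
      · intro T' hsub hmut a ha
        exact hreach_close a u huC (hmut a ha u (hsub huC))
    rcases Nat.lt_or_ge C.ncard 2 with hlt | hge
    · have h1 : ({u} : Set V) ⊆ C := by
        intro z hz; rw [Set.mem_singleton_iff] at hz; rw [hz]; exact huC
      have hCu : ({u} : Set V) = C := Set.eq_of_subset_of_ncard_le h1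
        (by rw [Set.ncard_singleton]; omega) (Set.toFinite _)
      have hsrcu : IsSource T u := by
        intro q hq
        have hqC : q ∈ C := hclose q u huC hq
        rw [← hCu, Set.mem_singleton_iff] at hqC
        rw [hqC] at hq
        exact hT.1 u hq
      exact ⟨u, Or.inl hsrcu, hu'⟩
    · obtain ⟨ℓ, hℓC, hℓleaf⟩ := hsrc C hSCC hge
      exact ⟨ℓ, Or.inr hℓleaf, hℓC.1.trans hu'⟩

end SourceReach



section Flip

variable {T : V → V → Prop}

lemma underlying_flip_s5 : underlying (flip T) = underlying T := by
  ext a b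
  constructor <;> rintro ⟨h1, h2⟩ <;> exact ⟨h1, h2.symm⟩

lemma isDitree_flip (hT : IsDitree T) : IsDitree (flip T) :=
  ⟨fun v h => hT.1 v h, by rw [underlying_flip_s5]; exact hT.2⟩

lemma isLeaf_flip {v : V} : IsLeaf (flip T) v ↔ IsLeaf T v := by
  rw [IsLeaf, IsLeaf, underlying_flip_s5]

lemma reach_flip {a b : V} :
    Relation.ReflTransGen (flip T) a b ↔ Relation.ReflTransGen T b a :=
  Relation.reflTransGen_swap

lemma isSCC_flip {S : Set V} : IsSCC (flip T) S ↔ IsSCC T S := by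
  constructor <;> rintro ⟨h1, h2, h3⟩
  · exact ⟨h1, fun u hu v hv => reach_flip.1 (h2 v hv u hu),
      fun T' hsub hmut => h3 T' hsub (fun u hu v hv => reach_flip.2 (hmut v hv u hu))⟩
  · exact ⟨h1, fun u hu v hv => reach_flip.2 (h2 v hv u hu),
      fun T' hsub hmut => h3 T' hsub (fun u hu v hv => reach_flip.1 (hmut v hv u hu))⟩

lemma isSourceSet_flip {S : Set V} : IsSourceSet (flip T) S ↔ IsSinkSet T S := by
  rw [IsSourceSet, IsSinkSet, isSCC_flip]
  constructor <;> rintro ⟨h1, h2⟩ <;> exact ⟨h1, fun u v hv huv => h2 v u hv huv⟩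

lemma isSource_flip {v : V} : IsSource (flip T) v ↔ IsSink T v := Iff.rfl

lemma sxr_flip {x : V} : sxr (flip T) x = sxr T x := by
  funext a b
  simp only [sxr, flip]
  rw [or_comm]

lemma br_flip {x p : V} : br (flip T) x p = br T x p := by
  rw [br, br, sxr_flip]

lemma rtg_rb_flip {B : Set V} {a b : V} :
    Relation.ReflTransGen (rb (flip T) B) a b ↔ Relation.ReflTransGen (rb T B) b a := by
  constructor <;> intro h
  · exact Relation.reflTransGen_swap.1
      (Relation.ReflTransGen.mono (r := rb (flip T) B) (p := Function.swap (rb T B)) (fun x y (h : rb (flip T) B x y) =>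
        (⟨h.1, h.2.2, h.2.1⟩ : Function.swap (rb T B) x y) : ∀ x y, rb (flip T) B x y → Function.swap (rb T B) x y) a b h)
  · exact Relation.ReflTransGen.mono (r := Function.swap (rb T B)) (p := rb (flip T) B)
      (fun x y (h : Function.swap (rb T B) x y) => (⟨h.1, h.2.2, h.2.1⟩ : rb (flip T) B x y) :
        ∀ x y, Function.swap (rb T B) x y → rb (flip T) B x y) a b (Relation.reflTransGen_swap.2 h)

end Flip

section Feeder

variable {T : V → V → Prop}

/-- there is a directed path (no repeated vertices) from `u` to `x` entering via `p`. -/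
def FeedChain (T : V → V → Prop) (x u p : V) : Prop :=
  ∃ P P' : List V, P.Chain' T ∧ P.Nodup ∧ P.head? = some u ∧ P = P' ++ [p, x]

lemma feedChain_of_rb_reach (hT : IsDitree T) {x p ℓ : V} (hpx : T p x)
    (h : Relation.ReflTransGen (rb T (br T x p)) ℓ p) : FeedChain T x ℓ p := by
  obtain ⟨P, hc, hh, hl, hm⟩ := reach_chain h
  obtain ⟨Q, hQc, hQn, hQh, hQl, hQm⟩ := chain_dedup P.length P le_rfl hc
  have hQT : Q.Chain' T := hQc.imp (fun a b h => h.1)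
  have hmem : ∀ a ∈ Q, a ∈ br T x p := by
    intro a ha
    rcases hm a (hQm a ha) with rfl | ⟨b, hb⟩
    · exact rb_mem_left mem_br_self h
    · exact hb.2.2
  have hxQ : x ∉ Q := fun hx => (mem_br_ne (ne_x_of_adj hT (Or.inl hpx)) (hmem x hx)) rfl
  have hQlp : Q.getLast? = some p := hQl.trans hl
  obtain ⟨P₀, hP₀⟩ := List.getLast?_eq_some_iff.1 hQlp
  refine ⟨Q ++ [x], P₀, ?_, ?_, ?_, ?_⟩
  · refine List.isChain_append.2 ⟨hQT, by simp, ?_⟩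
    intro a ha y hy
    simp only [List.head?_cons, Option.mem_def, Option.some_inj] at hy
    rw [hQlp] at ha
    simp only [Option.mem_def, Option.some_inj] at ha
    rw [← ha, ← hy]
    exact hpx
  · exact List.nodup_append.2 ⟨hQn, by simp, fun a ha b hb hab => hxQ (by
      simp only [List.mem_singleton] at hb
      rw [← hb, ← hab]; exact ha)⟩
  · have hQne : Q ≠ [] := by rintro rfl; simp at hQlp
    rw [List.head?_append_of_ne_nil _ hQne]
    exact hQh.trans hh
  · rw [hP₀]
    simp

lemma feeder_or_fail [Fintype V] (hT : IsDitree T)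
    (hsrc : ∀ S : Set V, IsSourceSet T S → 2 ≤ S.ncard → ∃ v ∈ S, IsLeaf T v)
    {x p : V} (hpx : T p x) :
    (∃ u, (IsSource T u ∨ IsLeaf T u) ∧ FeedChain T x u p) ∨
    (T x p ∧ ∃ C : Set V, p ∈ C ∧ C ⊆ br T x p ∧
      (∀ c ∈ C, ∀ c' ∈ C, Relation.ReflTransGen (rb T (br T x p)) c c') ∧
      (∀ q w, w ∈ C → q ∈ br T x p → T q w → q ∈ C) ∧
      (∀ w c, c ∈ C → Relation.ReflTransGen (rb T (br T x p)) w c →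
        Relation.ReflTransGen (rb T (br T x p)) c w → w ∈ C)) := by
  rcases exists_source_reacher hT hsrc (br T x p) p mem_br_self with
    ⟨ℓ, hℓ, hreach⟩ | ⟨C, ⟨q, w, hwC, hqB, hqw⟩, hCB, _, hmut, hclose, hcomplete⟩
  · exact Or.inl ⟨ℓ, hℓ, feedChain_of_rb_reach hT hpx hreach⟩
  · have hwbr : w ∈ br T x p := hCB hwC
    have hwx : w ≠ x := mem_br_ne (ne_x_of_adj hT (Or.inl hpx)) hwbr
    have hqx : q = x := by
      by_contra hqx
      exact hqB (br_step hwbr (Or.inr hqw) hwx hqx)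
    subst hqx
    have hwp : w = p := br_nbr_unique hT (Or.inl hpx) hwbr (Or.inr hqw)
    subst hwp
    exact Or.inr ⟨hqw, C, hwC, hCB, hmut, hclose, hcomplete⟩

end Feeder



section Main

variable {T : V → V → Prop}

lemma feedChain_arc {x u p : V} (hf : FeedChain T x u p) : T p x := by
  obtain ⟨P, P', hc, _, _, rfl⟩ := hf
  exact (List.isChain_cons_cons.1 (hc.suffix ⟨P', rfl⟩)).1

lemma feedChain_of_reach (hT : IsDitree T) {x ℓ : V} (hne : ℓ ≠ x)
    (h : Relation.ReflTransGen T ℓ x) : ∃ p, FeedChain T x ℓ p := by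
  obtain ⟨P, hc, hh, hl, _⟩ := reach_chain h
  obtain ⟨Q, hQc, hQn, hQh, hQl, _⟩ := chain_dedup P.length P le_rfl hc
  obtain ⟨Q₀, hQ₀⟩ := List.getLast?_eq_some_iff.1 (hQl.trans hl)
  rcases List.eq_nil_or_concat Q₀ with rfl | ⟨Q₁, p, rfl⟩
  · exfalso
    rw [hQ₀] at hQh
    have : x = ℓ := by simpa using (hQh.trans hh)
    exact hne this.symm
  · refine ⟨p, Q, Q₁, hQc, hQn, hQh.trans hh, ?_⟩
    rw [hQ₀, List.concat_eq_append, List.append_assoc]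
    rfl

lemma geodetic_superset [Fintype V] (hT : IsDitree T) {S' : Set V} (hgeo : IsGeodetic T S') :
    {v | IsSource T v ∨ IsSink T v ∨ IsLeaf T v} ⊆ S' := by
  intro s hs
  obtain ⟨u, hu, v, hv, p, hw, hmin, hsp⟩ := hgeo s
  have hnd : p.Nodup := by
    by_contra hnd
    obtain ⟨q, h1, h2, h3, h4, _⟩ := chain_shorten p hw.1 hnd
    have hwq : IsWalk T u v q := ⟨h1, h3.trans hw.2.1, h4.trans hw.2.2⟩
    have := hmin q hwq
    omega
  obtain ⟨l₁, l₂, rfl⟩ := List.append_of_mem hsp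
  have hu_eq : l₁ = [] → s ∈ S' := by
    intro h
    subst h
    have : u = s := by simpa using hw.2.1.symm
    rw [← this]; exact hu
  have hv_eq : l₂ = [] → s ∈ S' := by
    intro h
    subst h
    have hlast : (l₁ ++ [s]).getLast? = some s := List.getLast?_concat
    have : v = s := by
      have := hw.2.2.symm.trans hlast
      simpa using this
    rw [← this]; exact hv
  have harc_l : l₁ ≠ [] → ∃ c ∈ l₁, T c s := by
    intro h
    obtain ⟨l₁', c, rfl⟩ := List.eq_nil_or_concat l₁ |>.resolve_left h
    have h3 : List.Chain' T (l₁' ++ [c]) ∧ T c s ∧ List.Chain' T (s :: l₂) := by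
      have h := List.isChain_append.1 hw.1
      exact ⟨by rw [← List.concat_eq_append]; exact h.1, h.2.2 c (by simp) s rfl, h.2.1⟩
    exact ⟨c, by simp, h3.2.1⟩
  have harc_r : l₂ ≠ [] → ∃ d ∈ l₂, T s d := by
    intro h
    obtain ⟨d, l₂', rfl⟩ := List.exists_cons_of_ne_nil h
    have hsfx : (s :: d :: l₂').Chain' T := hw.1.suffix ⟨l₁, rfl⟩
    exact ⟨d, by simp, (List.isChain_cons_cons.1 hsfx).1⟩
  rcases hs with hsrc | hsnk | hleaf
  · rcases List.eq_nil_or_concat l₁ with h | ⟨l₁', c, rfl⟩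
    · exact hu_eq h
    · obtain ⟨c', hc', harc⟩ := harc_l (by simp)
      exact absurd harc (hsrc c')
  · rcases l₂ with _ | ⟨d, l₂'⟩
    · exact hv_eq rfl
    · obtain ⟨d', hd', harc⟩ := harc_r (by simp)
      exact absurd harc (hsnk d')
  · rcases eq_or_ne l₁ [] with h | h
    · exact hu_eq h
    rcases eq_or_ne l₂ [] with h2 | h2
    · exact hv_eq h2
    exfalso
    obtain ⟨c, hcl, hcs⟩ := harc_l h
    obtain ⟨d, hdl, hsd⟩ := harc_r h2
    have hcs_ne : s ≠ c := fun he => hT.1 s (he ▸ hcs)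
    have hsd_ne : s ≠ d := fun he => hT.1 s (he ▸ hsd)
    have hcnb : c ∈ (underlying T).neighborSet s := ⟨hcs_ne, Or.inr hcs⟩
    have hdnb : d ∈ (underlying T).neighborSet s := ⟨hsd_ne, Or.inl hsd⟩
    obtain ⟨a, ha⟩ := Set.ncard_eq_one.1 hleaf
    rw [ha] at hcnb hdnb
    have hcd : c = d := by
      rw [Set.mem_singleton_iff] at hcnb hdnb
      rw [hcnb, hdnb]
    have hdisj := (List.nodup_append.1 hnd).2.2
    exact hdisj c hcl c (by rw [hcd]; exact List.mem_cons_of_mem _ hdl) rfl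

end Main


/-- Let `T` be a ditree in which every source set of size at
least 2 contains a leaf and every sink set of size at least 2 contains a leaf.
Then the set of all sources, sinks and leaves of `T` is a minimum geodetic set
of `T`. -/
theorem sources_sinks_leaves_isMinGeodetic [Fintype V] (T : V → V → Prop)
    (hT : IsDitree T)
    (hsrc : ∀ S : Set V, IsSourceSet T S → 2 ≤ S.ncard → ∃ v ∈ S, IsLeaf T v)
    (hsnk : ∀ S : Set V, IsSinkSet T S → 2 ≤ S.ncard → ∃ v ∈ S, IsLeaf T v) :
    IsMinGeodetic T {v | IsSource T v ∨ IsSink T v ∨ IsLeaf T v} := by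
  classical
  have hTf : IsDitree (flip T) := isDitree_flip hT
  have hsnk' : ∀ A : Set V, IsSourceSet (flip T) A → 2 ≤ A.ncard → ∃ v ∈ A, IsLeaf (flip T) v := by
    intro A hA hc
    obtain ⟨v, hv1, hv2⟩ := hsnk A (isSourceSet_flip.1 hA) hc
    exact ⟨v, hv1, isLeaf_flip.2 hv2⟩
  constructor
  · intro x
    by_cases hxS : x ∈ {v | IsSource T v ∨ IsSink T v ∨ IsLeaf T v}
    · refine ⟨x, hxS, x, hxS, [x], ⟨by simp [List.Chain'], rfl, rfl⟩, ?_, by simp⟩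
      intro q hq
      have hq0 : q ≠ [] := by
        rintro rfl
        simp [IsWalk] at hq
      exact List.length_pos_iff.2 hq0
    · simp only [Set.mem_setOf_eq] at hxS
      push_neg at hxS
      obtain ⟨hnsrc, hnsnk, hnleaf⟩ := hxS
      have hmemS : ∀ ℓ, (IsSource T ℓ ∨ IsLeaf T ℓ) →
          ℓ ∈ {v | IsSource T v ∨ IsSink T v ∨ IsLeaf T v} :=
        fun ℓ h => h.elim (fun h => Or.inl h) (fun h => Or.inr (Or.inr h))
      have hmemSf : ∀ ℓ, (IsSource (flip T) ℓ ∨ IsLeaf (flip T) ℓ) →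
          ℓ ∈ {v | IsSource T v ∨ IsSink T v ∨ IsLeaf T v} :=
        fun ℓ h => h.elim (fun h => Or.inr (Or.inl h))
          (fun h => Or.inr (Or.inr (isLeaf_flip.1 h)))
      have hfeed1 : ∃ u p, (IsSource T u ∨ IsLeaf T u) ∧ FeedChain T x u p := by
        rcases exists_source_reacher hT hsrc Set.univ x (Set.mem_univ x) with
          ⟨ℓ, hℓ, hr⟩ | ⟨C, ⟨q, w, _, hq, _⟩, _⟩
        · have hne : ℓ ≠ x := by
            rintro rfl
            rcases hℓ with h | h
            · exact hnsrc h
            · exact hnleaf h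
          obtain ⟨p, hp⟩ := feedChain_of_reach hT hne (rb_mono hr)
          exact ⟨ℓ, p, hℓ, hp⟩
        · exact absurd (Set.mem_univ q) hq
      have hfed1 : ∃ v q, (IsSource (flip T) v ∨ IsLeaf (flip T) v) ∧
          FeedChain (flip T) x v q := by
        rcases exists_source_reacher hTf hsnk' Set.univ x (Set.mem_univ x) with
          ⟨ℓ, hℓ, hr⟩ | ⟨C, ⟨q, w, _, hq, _⟩, _⟩
        · have hne : ℓ ≠ x := by
            rintro rfl
            rcases hℓ with h | h
            · exact hnsnk h
            · exact hnleaf (isLeaf_flip.1 h)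
          obtain ⟨p, hp⟩ := feedChain_of_reach hTf hne (rb_mono hr)
          exact ⟨ℓ, p, hℓ, hp⟩
        · exact absurd (Set.mem_univ q) hq
      obtain ⟨u₁, p₁, hu₁, hu₁f⟩ := hfeed1
      obtain ⟨v₁, q₁, hv₁, hv₁f⟩ := hfed1
      have hΦ : ∃ u p v q, (IsSource T u ∨ IsLeaf T u) ∧ FeedChain T x u p ∧
          (IsSource (flip T) v ∨ IsLeaf (flip T) v) ∧ FeedChain (flip T) x v q ∧ p ≠ q := by
        by_contra hcon
        push_neg at hcon
        have hall_feed : ∀ u p, (IsSource T u ∨ IsLeaf T u) → FeedChain T x u p → p = q₁ :=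
          fun u p hu hf => hcon u p v₁ q₁ hu hf hv₁ hv₁f
        have hall_fed : ∀ v q, (IsSource (flip T) v ∨ IsLeaf (flip T) v) →
            FeedChain (flip T) x v q → q = p₁ :=
          fun v q hv hf => (hcon u₁ p₁ v q hu₁ hu₁f hv hf).symm
        have hn : p₁ = q₁ := hall_feed u₁ p₁ hu₁ hu₁f
        have hnx : T p₁ x := feedChain_arc hu₁f
        have hxn : T x p₁ := by
          have h := feedChain_arc (T := flip T) hv₁f
          rw [hn]; exact h
        have hnbr : p₁ ∈ (underlying T).neighborSet x :=
          ⟨Ne.symm (ne_x_of_adj hT (Or.inl hnx)), Or.inl hxn⟩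
        obtain ⟨r, hr, hrn⟩ : ∃ r ∈ (underlying T).neighborSet x, r ≠ p₁ := by
          by_contra hcon2
          push_neg at hcon2
          have hset : (underlying T).neighborSet x = {p₁} :=
            Set.eq_singleton_iff_unique_mem.2 ⟨hnbr, hcon2⟩
          exact hnleaf (by rw [IsLeaf, hset]; simp)
        have hrx : T r x := by
          rcases hr.2 with hxr | hrx
          · rcases feeder_or_fail hTf hsnk' (x := x) (p := r) hxr with ⟨v, hv, hf⟩ | ⟨h, _⟩
            · exact absurd (hall_fed v r hv hf) hrn
            · exact h
          · exact hrx
        rcases feeder_or_fail hT hsrc (x := x) (p := r) hrx with ⟨u, hu, hf⟩ | hfail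
        · exact hrn ((hall_feed u r hu hf).trans hn.symm)
        obtain ⟨hxr, C, hrC, hCB, hmut, hclose, hcomplete⟩ := hfail
        rcases feeder_or_fail hTf hsnk' (x := x) (p := r) (show flip T r x from hxr) with
          ⟨v, hv, hf⟩ | hfail'
        · exact absurd (hall_fed v r hv hf) hrn
        obtain ⟨_, C', hrC', hCB', hmut', hclose', hcomplete'⟩ := hfail'
        rw [br_flip] at hCB' hmut' hclose' hcomplete'
        have hC'C : ∀ w ∈ C', w ∈ C := by
          intro w hw
          exact hcomplete w r hrC (rtg_rb_flip.1 (hmut' r hrC' w hw))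
            (rtg_rb_flip.1 (hmut' w hw r hrC'))
        have hCC' : ∀ w ∈ C, w ∈ C' := by
          intro w hw
          exact hcomplete' w r hrC' (rtg_rb_flip.2 (hmut r hrC w hw))
            (rtg_rb_flip.2 (hmut w hw r hrC))
        have hbrK : ∀ w ∈ br T x r, w ∈ C := by
          intro w hw
          have hw' : Relation.ReflTransGen (sxr T x) r w := hw
          clear hw
          induction hw' with
          | refl => exact hrC
          | @tail b c hrb hbc ih =>
            have hbbr : b ∈ br T x r := hrb
            have hcbr : c ∈ br T x r := Relation.ReflTransGen.tail hrb hbc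
            rcases hbc.1 with hTbc | hTcb
            · exact hC'C c (hclose' c b (hCC' b ih) hcbr hTbc)
            · exact hclose c b ih hcbr hTcb
        obtain ⟨w, hwbr, hwleaf⟩ := exists_leaf_in_br hT (Or.inl hrx)
        have hwC : w ∈ C := hbrK w hwbr
        have hf : FeedChain T x w r := feedChain_of_rb_reach hT hrx (hmut w hwC r hrC)
        exact hrn ((hall_feed w r (Or.inr hwleaf) hf).trans hn.symm)
      obtain ⟨u, p, v, q, hu, huf, hv, hvf, hpq⟩ := hΦ
      obtain ⟨P1, P1', hP1c, hP1n, hP1h, hP1form⟩ := huf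
      obtain ⟨Qf, Q', hQfc, hQfn, hQfh, hQform⟩ := hvf
      have hTpx : T p x := feedChain_arc ⟨P1, P1', hP1c, hP1n, hP1h, hP1form⟩
      have hTxq : T x q := feedChain_arc (T := flip T) ⟨Qf, Q', hQfc, hQfn, hQfh, hQform⟩
      set tail2 : List V := q :: Q'.reverse with htail2
      have hP2 : Qf.reverse = x :: tail2 := by
        rw [hQform, htail2]
        simp
      have hP2c : List.Chain' T Qf.reverse := List.isChain_reverse.2 hQfc
      have htc : List.Chain' T tail2 := by
        have h := hP2c
        rw [hP2] at h
        exact h.tail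
      set L : List V := P1 ++ tail2 with hL
      have hP1last : P1.getLast? = some x := by
        rw [hP1form]
        have h : P1' ++ [p, x] = (P1' ++ [p]) ++ [x] := by simp
        rw [h, List.getLast?_concat]
      have hLc : List.Chain' T L := by
        refine List.isChain_append.2 ⟨hP1c, htc, ?_⟩
        intro a ha y hy
        rw [hP1last] at ha
        simp only [Option.mem_def, Option.some_inj] at ha
        rw [htail2] at hy
        simp only [List.head?_cons, Option.mem_def, Option.some_inj] at hy
        rw [← ha, ← hy]
        exact hTxq
      have hbr1 : ∀ a ∈ P1, a ≠ x → a ∈ br T x p := feed_mem_br hT hP1form hP1c hP1n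
      have hbr2 : ∀ a ∈ Qf, a ≠ x → a ∈ br T x q := by
        have h := feed_mem_br hTf hQform hQfc hQfn
        intro a ha hax
        have h2 := h a ha hax
        rw [br_flip] at h2
        exact h2
      have hP2n : (x :: tail2).Nodup := by
        rw [← hP2, List.nodup_reverse]
        exact hQfn
      have hxtail : x ∉ tail2 := (List.nodup_cons.1 hP2n).1
      have htn : tail2.Nodup := (List.nodup_cons.1 hP2n).2
      have hdisj : ∀ a ∈ P1, a ∉ tail2 := by
        intro a ha hat
        by_cases hax : a = x
        · rw [hax] at hat
          exact hxtail hat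
        · have h1 := hbr1 a ha hax
          have h2 : a ∈ Qf := by
            have h3 : a ∈ Qf.reverse := by
              rw [hP2]
              exact List.mem_cons_of_mem _ hat
            exact List.mem_reverse.1 h3
          exact br_disjoint hT (Or.inl hTpx) (Or.inr hTxq) hpq h1 (hbr2 a h2 hax)
      have hLn : L.Nodup := List.nodup_append.2 ⟨hP1n, htn, fun a ha b hb hab => hdisj a ha (hab ▸ hb)⟩
      have hP1ne : P1 ≠ [] := by rw [hP1form]; simp
      have hLh : L.head? = some u := by
        rw [hL, List.head?_append_of_ne_nil _ hP1ne]
        exact hP1h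
      have hLl : L.getLast? = some v := by
        rw [hL, List.getLast?_append_of_ne_nil _ (l₂ := tail2) (by rw [htail2]; simp)]
        have h1 : Qf.reverse.getLast? = some v := by
          rw [List.getLast?_reverse]
          exact hQfh
        rw [hP2, htail2, List.getLast?_cons_cons] at h1
        rw [htail2]
        exact h1
      have hxL : x ∈ L := by
        rw [hL, hP1form]
        exact List.mem_append_left _ (by simp)
      exact ⟨u, hmemS u hu, v, hmemSf v hv, L, ⟨hLc, hLh, hLl⟩,
        nodup_walk_min hT hLc hLn hLh hLl, hxL⟩
  · intro S' hgeo
    exact Set.ncard_le_ncard (geodetic_superset hT hgeo) (Set.toFinite _)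


end GeoPaper
end

section
/- Let T be a ditree with at least two vertices, let L be its set of leaves, and let t be the number of source sets and sink sets of T that contain no leaf. Then the geodetic number of T (the minimum size of a geodetic set of T) equals |L| + t. -/
namespace GeoPaper

variable {V : Type*}

set_option linter.unusedSectionVars false
set_option linter.unusedVariables false
set_option linter.unreachableTactic false
set_option linter.unusedTactic false

section Aux
variable [DecidableEq V] {T : V → V → Prop}

lemma adj_of_arc (hT : IsDitree T) {a b : V} (h : T a b) : (underlying T).Adj a b :=
  ⟨fun he => hT.1 a (he ▸ h), Or.inl h⟩

noncomputable def tpath (hT : IsDitree T) (u v : V) : (underlying T).Walk u v :=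
  (hT.2.existsUnique_path u v).choose

lemma tpath_isPath (hT : IsDitree T) (u v : V) : (tpath hT u v).IsPath :=
  (hT.2.existsUnique_path u v).choose_spec.1

lemma tpath_unique (hT : IsDitree T) {u v : V} (p : (underlying T).Walk u v)
    (hp : p.IsPath) : p = tpath hT u v :=
  ((hT.2.existsUnique_path u v).choose_spec.2 p hp)

lemma tpath_self (hT : IsDitree T) (x : V) : tpath hT x x = SimpleGraph.Walk.nil :=
  (tpath_unique hT _ SimpleGraph.Walk.IsPath.nil).symm

/-- forwardness of the tree path -/
def Fwd (hT : IsDitree T) (u v : V) : Prop :=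
  ∀ d ∈ (tpath hT u v).darts, T d.fst d.snd

lemma reach_of_darts (hT : IsDitree T) : ∀ {u v : V} (W : (underlying T).Walk u v),
    (∀ d ∈ W.darts, T d.fst d.snd) → Reach T u v := by
  intro u v W
  induction W with
  | nil => intro _; exact Relation.ReflTransGen.refl
  | cons h p ih =>
    intro hd
    refine Relation.ReflTransGen.head ?_ (ih fun d hdm => hd d ?_)
    · exact hd ⟨(_, _), h⟩ (by simp [SimpleGraph.Walk.darts_cons])
    · simp [SimpleGraph.Walk.darts_cons, hdm]

lemma reach_of_fwd (hT : IsDitree T) {u v : V} (h : Fwd hT u v) : Reach T u v :=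
  reach_of_darts hT _ h

lemma fwd_of_reach (hT : IsDitree T) {u v : V} (h : Reach T u v) : Fwd hT u v := by
  induction h with
  | refl => intro d hd; rw [tpath_self] at hd; simp at hd
  | @tail w v huw hwv ih =>
    by_cases hv : v ∈ (tpath hT u w).support
    · have he : (tpath hT u w).takeUntil v hv = tpath hT u v :=
        tpath_unique hT _ ((tpath_isPath hT u w).takeUntil hv)
      intro d hd
      rw [← he] at hd
      exact ih d (SimpleGraph.Walk.darts_takeUntil_subset _ hv hd)
    · have hadj : (underlying T).Adj w v := adj_of_arc hT hwv
      have hP : ((tpath hT u w).concat hadj).IsPath := by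
        rw [← SimpleGraph.Walk.isPath_reverse_iff, SimpleGraph.Walk.reverse_concat]
        rw [SimpleGraph.Walk.cons_isPath_iff]
        refine ⟨(tpath_isPath hT u w).reverse, ?_⟩
        rw [SimpleGraph.Walk.support_reverse, List.mem_reverse]
        exact hv
      have he : (tpath hT u w).concat hadj = tpath hT u v := tpath_unique hT _ hP
      intro d hd
      rw [← he, SimpleGraph.Walk.darts_concat, List.concat_eq_append, List.mem_append] at hd
      rcases hd with hd | hd
      · exact ih d hd
      · simp at hd; subst hd; exact hwv

lemma exists_walk_of_list (hT : IsDitree T) :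
    ∀ (p : List V), p.Chain' (underlying T).Adj → ∀ {u v : V},
      p.head? = some u → p.getLast? = some v →
      ∃ W : (underlying T).Walk u v, W.support = p := by
  intro p
  induction p with
  | nil => intro _ u v h1 _; simp at h1
  | cons a rest ih =>
    intro hc u v h1 h2
    simp at h1; subst h1
    cases rest with
    | nil =>
      simp at h2; subst h2
      exact ⟨SimpleGraph.Walk.nil, rfl⟩
    | cons b rest' =>
      simp only [List.Chain', List.isChain_cons_cons] at hc
      have h2' : (b :: rest').getLast? = some v := by
        rwa [List.getLast?_cons_cons] at h2
      obtain ⟨W', hW'⟩ := ih hc.2 rfl h2'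
      exact ⟨SimpleGraph.Walk.cons hc.1 W', by simp [hW']⟩

lemma tpath_length_le (hT : IsDitree T) {u v : V} (W : (underlying T).Walk u v) :
    (tpath hT u v).length ≤ W.length := by
  rw [← tpath_unique hT W.bypass W.bypass_isPath]
  exact W.length_bypass_le

lemma chain'_adj_of_chain'_T (hT : IsDitree T) {p : List V} (h : p.Chain' T) :
    p.Chain' (underlying T).Adj := h.imp fun {a b} hab => adj_of_arc hT hab

lemma head?_support {u v : V} (W : (underlying T).Walk u v) :
    W.support.head? = some u := by
  rw [SimpleGraph.Walk.support_eq_cons]; rfl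

lemma getLast?_support {u v : V} (W : (underlying T).Walk u v) :
    W.support.getLast? = some v := by
  rw [← List.head?_reverse, ← SimpleGraph.Walk.support_reverse]
  exact head?_support _

lemma chain'_support_of_darts (hT : IsDitree T) {u v : V} (W : (underlying T).Walk u v)
    (h : ∀ d ∈ W.darts, T d.fst d.snd) : W.support.Chain' T := by
  induction W with
  | nil => exact List.isChain_singleton _
  | cons hadj p ih =>
    rw [SimpleGraph.Walk.support_cons]
    simp only [List.Chain', List.isChain_cons]
    constructor
    · intro y hy
      have hy' : p.support.head? = some y := hy
      rw [head?_support] at hy'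
      cases hy'
      exact h ⟨(_, _), hadj⟩ (by simp [SimpleGraph.Walk.darts_cons])
    · exact ih fun d hd => h d (by simp [SimpleGraph.Walk.darts_cons, hd])

lemma isWalk_support_of_fwd (hT : IsDitree T) {u v : V} (h : Fwd hT u v) :
    IsWalk T u v (tpath hT u v).support :=
  ⟨chain'_support_of_darts hT _ h, head?_support _, getLast?_support _⟩

lemma isWalk_length_ge (hT : IsDitree T) {u v : V} {q : List V} (hq : IsWalk T u v q) :
    (tpath hT u v).length + 1 ≤ q.length := by
  obtain ⟨W, hW⟩ := exists_walk_of_list hT q (chain'_adj_of_chain'_T hT hq.1) hq.2.1 hq.2.2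
  calc (tpath hT u v).length + 1 ≤ W.length + 1 := by
        have := tpath_length_le hT W; omega
    _ = W.support.length := (SimpleGraph.Walk.length_support W).symm
    _ = q.length := by rw [hW]

lemma mem_interval_of_fwd (hT : IsDitree T) {u v x : V} (h : Fwd hT u v)
    (hx : x ∈ (tpath hT u v).support) : x ∈ interval T u v := by
  refine ⟨(tpath hT u v).support, isWalk_support_of_fwd hT h, ?_, hx⟩
  intro q hq
  rw [SimpleGraph.Walk.length_support]
  exact isWalk_length_ge hT hq

lemma mem_interval_self (hT : IsDitree T) (x : V) : x ∈ interval T x x := by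
  refine ⟨[x], ⟨List.isChain_singleton _, rfl, rfl⟩, ?_, by simp⟩
  intro q hq
  cases q with
  | nil => exact absurd hq.2.1 (by simp)
  | cons a l => simp

open SimpleGraph Walk in
lemma concat_isPath (hT : IsDitree T) {u w v : V} (p : (underlying T).Walk u w)
    (hp : p.IsPath) (hadj : (underlying T).Adj w v) (hv : v ∉ p.support) :
    (p.concat hadj).IsPath := by
  rw [← SimpleGraph.Walk.isPath_reverse_iff, SimpleGraph.Walk.reverse_concat,
    SimpleGraph.Walk.cons_isPath_iff]
  exact ⟨hp.reverse, by rwa [SimpleGraph.Walk.support_reverse, List.mem_reverse]⟩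

lemma tpath_concat (hT : IsDitree T) {u w v : V} (hadj : (underlying T).Adj w v)
    (hv : v ∉ (tpath hT u w).support) :
    tpath hT u v = (tpath hT u w).concat hadj :=
  (tpath_unique hT _ (concat_isPath hT _ (tpath_isPath hT u w) hadj hv)).symm

lemma tpath_cons (hT : IsDitree T) {x m v : V} (hadj : (underlying T).Adj x m)
    (hx : x ∉ (tpath hT m v).support) :
    tpath hT x v = SimpleGraph.Walk.cons hadj (tpath hT m v) :=
  (tpath_unique hT _ (by rw [SimpleGraph.Walk.cons_isPath_iff]
                         exact ⟨tpath_isPath hT m v, hx⟩)).symm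

lemma tpath_takeUntil (hT : IsDitree T) {u w v : V} (hv : v ∈ (tpath hT u w).support) :
    tpath hT u v = (tpath hT u w).takeUntil v hv :=
  (tpath_unique hT _ ((tpath_isPath hT u w).takeUntil hv)).symm

lemma tpath_dropUntil (hT : IsDitree T) {u w x : V} (hx : x ∈ (tpath hT u w).support) :
    tpath hT x w = (tpath hT u w).dropUntil x hx :=
  (tpath_unique hT _ ((tpath_isPath hT u w).dropUntil hx)).symm

lemma tpath_reverse (hT : IsDitree T) (u v : V) :
    tpath hT v u = (tpath hT u v).reverse :=
  (tpath_unique hT _ ((tpath_isPath hT u v).reverse)).symm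

lemma mem_tpath_symm (hT : IsDitree T) {u v x : V} (h : x ∈ (tpath hT u v).support) :
    x ∈ (tpath hT v u).support := by
  rw [tpath_reverse, SimpleGraph.Walk.support_reverse, List.mem_reverse]; exact h

lemma tpath_triangle (hT : IsDitree T) (z w p : V) {x : V}
    (hx : x ∈ (tpath hT z p).support) :
    x ∈ (tpath hT z w).support ∨ x ∈ (tpath hT w p).support := by
  have h1 : (tpath hT z p).support ⊆ ((tpath hT z w).append (tpath hT w p)).support := by
    have hb : ((tpath hT z w).append (tpath hT w p)).bypass = tpath hT z p :=
      tpath_unique hT _ ((tpath hT z w).append (tpath hT w p)).bypass_isPath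
    rw [← hb]; exact SimpleGraph.Walk.support_bypass_subset _
  have := h1 hx
  rw [SimpleGraph.Walk.support_append, List.mem_append] at this
  rcases this with h | h
  · exact Or.inl h
  · exact Or.inr (List.mem_of_mem_tail h)

lemma tpath_adj_left (hT : IsDitree T) {w c m x : V} (hadj : (underlying T).Adj w c)
    (hx : x ∈ (tpath hT w m).support) :
    x = w ∨ x ∈ (tpath hT c m).support := by
  rcases tpath_triangle hT w c m hx with h | h
  · have : tpath hT w c = SimpleGraph.Walk.cons hadj SimpleGraph.Walk.nil :=
      (tpath_unique hT _ (by simp [SimpleGraph.Walk.cons_isPath_iff, hadj.ne])).symm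
    rw [this] at h
    simp at h
    rcases h with h | h
    · exact Or.inl h
    · subst h; exact Or.inr (SimpleGraph.Walk.start_mem_support _)
  · exact Or.inr h

lemma mem_support_start (hT : IsDitree T) (u v : V) : u ∈ (tpath hT u v).support :=
  SimpleGraph.Walk.start_mem_support _

lemma mem_support_end (hT : IsDitree T) (u v : V) : v ∈ (tpath hT u v).support :=
  SimpleGraph.Walk.end_mem_support _

lemma reach_prefix (hT : IsDitree T) {g w x : V} (h : Reach T g w)
    (hx : x ∈ (tpath hT g w).support) : Reach T g x := by
  apply reach_of_fwd hT
  intro d hd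
  rw [tpath_takeUntil hT hx] at hd
  exact fwd_of_reach hT h d (SimpleGraph.Walk.darts_takeUntil_subset _ hx hd)

lemma reach_suffix (hT : IsDitree T) {g w x : V} (h : Reach T g w)
    (hx : x ∈ (tpath hT g w).support) : Reach T x w := by
  apply reach_of_fwd hT
  intro d hd
  rw [tpath_dropUntil hT hx] at hd
  exact fwd_of_reach hT h d (SimpleGraph.Walk.darts_dropUntil_subset _ hx hd)

lemma tpath_pair (hT : IsDitree T) {x m : V} (hadj : (underlying T).Adj x m) :
    tpath hT x m = SimpleGraph.Walk.cons hadj SimpleGraph.Walk.nil :=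
  (tpath_unique hT _ (by simp [SimpleGraph.Walk.cons_isPath_iff, hadj.ne])).symm

lemma arc_of_reach_adj (hT : IsDitree T) {x m : V} (h : Reach T x m)
    (hadj : (underlying T).Adj x m) : T x m := by
  have := fwd_of_reach hT h ⟨(x, m), hadj⟩ ?_
  · exact this
  · rw [tpath_pair hT hadj]; simp [SimpleGraph.Walk.darts_cons]

def ArrivesVia (hT : IsDitree T) (u x m : V) : Prop :=
  Reach T u x ∧ (underlying T).Adj m x ∧ x ∉ (tpath hT u m).support

def LeavesVia (hT : IsDitree T) (x v m : V) : Prop :=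
  Reach T x v ∧ (underlying T).Adj x m ∧ x ∉ (tpath hT m v).support

lemma walk_decomp {G : SimpleGraph V} :
    ∀ {x u : V} (R : G.Walk x u), x ≠ u →
      ∃ (m : V) (hadj : G.Adj x m) (R' : G.Walk m u), R = SimpleGraph.Walk.cons hadj R' := by
  intro x u R hne
  cases R with
  | nil => exact absurd rfl hne
  | cons hadj R' => exact ⟨_, hadj, R', rfl⟩

lemma exists_arrivesVia (hT : IsDitree T) {u x : V} (h : Reach T u x) (hne : u ≠ x) :
    ∃ m, ArrivesVia hT u x m := by
  obtain ⟨m, hadj, R', hR⟩ := walk_decomp (tpath hT x u) (Ne.symm hne)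
  have hP := tpath_isPath hT x u
  rw [hR, SimpleGraph.Walk.cons_isPath_iff] at hP
  have hR' : R' = tpath hT m u := tpath_unique hT _ hP.1
  refine ⟨m, h, hadj.symm, ?_⟩
  rw [tpath_reverse, SimpleGraph.Walk.support_reverse, List.mem_reverse, ← hR']
  exact hP.2

lemma exists_leavesVia (hT : IsDitree T) {x v : V} (h : Reach T x v) (hne : x ≠ v) :
    ∃ m, LeavesVia hT x v m := by
  obtain ⟨m, hadj, R', hR⟩ := walk_decomp (tpath hT x v) hne
  have hP := tpath_isPath hT x v
  rw [hR, SimpleGraph.Walk.cons_isPath_iff] at hP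
  have hR' : R' = tpath hT m v := tpath_unique hT _ hP.1
  exact ⟨m, h, hadj, by rw [← hR']; exact hP.2⟩

lemma arrives_ne (hT : IsDitree T) {u x m : V} (h : ArrivesVia hT u x m) : u ≠ x := by
  intro he; subst he
  exact h.2.2 (SimpleGraph.Walk.start_mem_support _)

lemma leaves_ne (hT : IsDitree T) {x v m : V} (h : LeavesVia hT x v m) : x ≠ v := by
  intro he
  exact h.2.2 (he ▸ SimpleGraph.Walk.end_mem_support _)

lemma mem_interval_of_via (hT : IsDitree T) {u v x mu mv : V}
    (hu : ArrivesVia hT u x mu) (hv : LeavesVia hT x v mv) (hne : mu ≠ mv) :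
    x ∈ interval T u v := by
  obtain ⟨hru, hadju, hxu⟩ := hu
  obtain ⟨hrv, hadjv, hxv⟩ := hv
  -- key disjointness
  have hxmid : x ∈ (tpath hT mu mv).support := by
    have hP : (SimpleGraph.Walk.cons hadju
        (SimpleGraph.Walk.cons hadjv SimpleGraph.Walk.nil) :
        (underlying T).Walk mu mv).IsPath := by
      apply SimpleGraph.Walk.IsPath.mk'
      simp
      exact ⟨⟨hadju.ne, hne⟩, hadjv.ne⟩
    have := tpath_unique hT _ hP
    rw [← this]
    simp
  have hdisj : ∀ y, y ∈ (tpath hT u mu).support → y ∈ (tpath hT mv v).support → False := by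
    intro y hy1 hy2
    have h1 : x ∉ (tpath hT y mu).support := by
      intro hx
      apply hxu
      rw [tpath_dropUntil hT hy1] at hx
      exact SimpleGraph.Walk.support_dropUntil_subset _ hy1 hx
    have h2 : x ∉ (tpath hT y mv).support := by
      intro hx
      apply hxv
      have hx' := mem_tpath_symm hT hx
      rw [tpath_takeUntil hT hy2] at hx'
      exact SimpleGraph.Walk.support_takeUntil_subset _ hy2 hx'
    rcases tpath_triangle hT mu y mv hxmid with h | h
    · exact h1 (mem_tpath_symm hT h)
    · exact h2 h
  have e1 : tpath hT u x = (tpath hT u mu).concat hadju := tpath_concat hT hadju hxu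
  have e2 : tpath hT x v = SimpleGraph.Walk.cons hadjv (tpath hT mv v) := tpath_cons hT hadjv hxv
  have hWP : ((tpath hT u x).append (tpath hT x v)).IsPath := by
    apply SimpleGraph.Walk.IsPath.mk'
    rw [SimpleGraph.Walk.support_append]
    rw [e2]
    have htail : (SimpleGraph.Walk.cons hadjv (tpath hT mv v)).support.tail
        = (tpath hT mv v).support := by simp
    rw [htail]
    apply List.Nodup.append ((tpath_isPath hT u x).support_nodup)
      ((tpath_isPath hT mv v).support_nodup)
    intro y hy1 hy2
    rw [e1, SimpleGraph.Walk.support_concat, List.mem_append] at hy1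
    rcases hy1 with hy1 | hy1
    · exact hdisj y hy1 hy2
    · simp at hy1; subst hy1; exact hxv hy2
  have hWeq : (tpath hT u x).append (tpath hT x v) = tpath hT u v := tpath_unique hT _ hWP
  have hfwd : Fwd hT u v := by
    intro d hd
    rw [← hWeq, SimpleGraph.Walk.darts_append, List.mem_append] at hd
    rcases hd with hd | hd
    · exact fwd_of_reach hT hru d hd
    · exact fwd_of_reach hT hrv d hd
  apply mem_interval_of_fwd hT hfwd
  rw [← hWeq, SimpleGraph.Walk.support_append, List.mem_append]
  left; exact SimpleGraph.Walk.end_mem_support _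

/-- the strongly connected component of `x`. -/
def MSCC (D : V → V → Prop) (x : V) : Set V :=
  {y | Relation.ReflTransGen D x y ∧ Relation.ReflTransGen D y x}

lemma mem_mscc_self (D : V → V → Prop) (x : V) : x ∈ MSCC D x :=
  ⟨Relation.ReflTransGen.refl, Relation.ReflTransGen.refl⟩

lemma mscc_isSCC (D : V → V → Prop) (x : V) : IsSCC D (MSCC D x) := by
  refine ⟨⟨x, mem_mscc_self D x⟩, ?_, ?_⟩
  · intro u hu v hv
    exact hu.2.trans hv.1
  · intro S hsub hS y hy
    exact ⟨hS x (hsub (mem_mscc_self D x)) y hy, hS y hy x (hsub (mem_mscc_self D x))⟩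

section Geo
variable {Geo : Set V}

lemma geo_of_scc (hT : IsDitree T)
    (hypL : ∀ ℓ, IsLeaf T ℓ → ℓ ∈ Geo)
    (hypS : ∀ S : Set V, (IsSourceSet T S ∨ IsSinkSet T S) → (∀ v ∈ S, ¬ IsLeaf T v) →
      ∃ g ∈ Geo, g ∈ S)
    {x : V} (h : IsSourceSet T (MSCC T x) ∨ IsSinkSet T (MSCC T x)) :
    ∃ g ∈ Geo, g ∈ MSCC T x := by
  by_cases hl : ∃ ℓ ∈ MSCC T x, IsLeaf T ℓ
  · obtain ⟨ℓ, hℓm, hℓ⟩ := hl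
    exact ⟨ℓ, hypL ℓ hℓ, hℓm⟩
  · push_neg at hl
    exact hypS _ h hl

lemma lemF [Fintype V] (hT : IsDitree T)
    (hypL : ∀ ℓ, IsLeaf T ℓ → ℓ ∈ Geo)
    (hypS : ∀ S : Set V, (IsSourceSet T S ∨ IsSinkSet T S) → (∀ v ∈ S, ¬ IsLeaf T v) →
      ∃ g ∈ Geo, g ∈ S) :
    ∀ x, ∃ g ∈ Geo, Reach T g x := by
  intro x
  generalize hn : ({z | Reach T z x}).ncard = n
  induction n using Nat.strong_induction_on generalizing x with
  | _ n ih =>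
  by_cases hsrc : ∀ w c, c ∈ MSCC T x → T w c → w ∈ MSCC T x
  · obtain ⟨g, hg, hgm⟩ := geo_of_scc hT hypL hypS (Or.inl ⟨mscc_isSCC T x, hsrc⟩)
    exact ⟨g, hg, hgm.2⟩
  · push_neg at hsrc
    obtain ⟨w, c, hc, harc, hw⟩ := hsrc
    have hreach : Reach T w x := (Relation.ReflTransGen.single harc).trans hc.2
    have hsub : {z | Reach T z w} ⊂ {z | Reach T z x} := by
      constructor
      · intro z hz; exact Relation.ReflTransGen.trans hz hreach
      · intro hcon
        have hx : x ∈ {z | Reach T z x} := Relation.ReflTransGen.refl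
        have : Reach T x w := hcon hx
        exact hw ⟨this, hreach⟩
    have hlt : ({z | Reach T z w}).ncard < n := by
      rw [← hn]
      exact Set.ncard_lt_ncard hsub (Set.toFinite _)
    obtain ⟨g, hg, hgr⟩ := ih _ hlt w rfl
    exact ⟨g, hg, hgr.trans hreach⟩

lemma lemF' [Fintype V] (hT : IsDitree T)
    (hypL : ∀ ℓ, IsLeaf T ℓ → ℓ ∈ Geo)
    (hypS : ∀ S : Set V, (IsSourceSet T S ∨ IsSinkSet T S) → (∀ v ∈ S, ¬ IsLeaf T v) →
      ∃ g ∈ Geo, g ∈ S) :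
    ∀ x, ∃ g ∈ Geo, Reach T x g := by
  intro x
  generalize hn : ({z | Reach T x z}).ncard = n
  induction n using Nat.strong_induction_on generalizing x with
  | _ n ih =>
  by_cases hsnk : ∀ u w, u ∈ MSCC T x → T u w → w ∈ MSCC T x
  · obtain ⟨g, hg, hgm⟩ := geo_of_scc hT hypL hypS
      (Or.inr ⟨mscc_isSCC T x, fun u w hu harc => hsnk u w hu harc⟩)
    exact ⟨g, hg, hgm.1⟩
  · push_neg at hsnk
    obtain ⟨c, w, hc, harc, hw⟩ := hsnk
    have hreach : Reach T x w := hc.1.trans (Relation.ReflTransGen.single harc)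
    have hsub : {z | Reach T w z} ⊂ {z | Reach T x z} := by
      constructor
      · intro z hz; exact Relation.ReflTransGen.trans hreach hz
      · intro hcon
        have hx : x ∈ {z | Reach T x z} := Relation.ReflTransGen.refl
        have : Reach T w x := hcon hx
        exact hw ⟨hreach, this⟩
    have hlt : ({z | Reach T w z}).ncard < n := by
      rw [← hn]
      exact Set.ncard_lt_ncard hsub (Set.toFinite _)
    obtain ⟨g, hg, hgr⟩ := ih _ hlt w rfl
    exact ⟨g, hg, hreach.trans hgr⟩

end Geo

lemma exists_penult (hT : IsDitree T) {x z : V} (hne : z ≠ x) :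
    ∃ (pz : V) (hadj : (underlying T).Adj pz z),
      z ∉ (tpath hT x pz).support ∧ tpath hT x z = (tpath hT x pz).concat hadj := by
  obtain ⟨pz, hadj, R', hR⟩ := walk_decomp (tpath hT z x) hne
  have hP := tpath_isPath hT z x
  rw [hR, SimpleGraph.Walk.cons_isPath_iff] at hP
  have hR' : R' = tpath hT pz x := tpath_unique hT _ hP.1
  have hz : z ∉ (tpath hT x pz).support := by
    intro hcon
    exact hP.2 (by rw [hR']; exact mem_tpath_symm hT hcon)
  exact ⟨pz, hadj.symm, hz, tpath_concat hT hadj.symm hz⟩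

lemma penult_unique (hT : IsDitree T) {x z pz y : V}
    (hadj : (underlying T).Adj pz z) (hz : z ∉ (tpath hT x pz).support)
    (he : tpath hT x z = (tpath hT x pz).concat hadj)
    (hyadj : (underlying T).Adj y z) (hy : y ∈ (tpath hT x z).support) : y = pz := by
  have hy' : y ∈ (tpath hT x pz).support := by
    rw [he, SimpleGraph.Walk.support_concat, List.mem_append] at hy
    rcases hy with hy | hy
    · exact hy
    · simp at hy; exact absurd hy hyadj.ne
  have hsub : (tpath hT y pz).support ⊆ (tpath hT x pz).support := by
    rw [tpath_dropUntil hT hy']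
    exact SimpleGraph.Walk.support_dropUntil_subset _ hy'
  have hz2 : z ∉ (tpath hT y pz).support := fun hc => hz (hsub hc)
  have hP2 : ((tpath hT y pz).concat hadj).IsPath :=
    concat_isPath hT _ (tpath_isPath hT y pz) hadj hz2
  have he2 : (tpath hT y pz).concat hadj = tpath hT y z := tpath_unique hT _ hP2
  have he3 : tpath hT y z = SimpleGraph.Walk.cons hyadj SimpleGraph.Walk.nil :=
    tpath_pair hT hyadj
  have hlen : (tpath hT y pz).length + 1 = 1 := by
    have := congrArg SimpleGraph.Walk.length (he2.trans he3)
    simpa [SimpleGraph.Walk.length_concat] using this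
  have h0 : (tpath hT y pz).length = 0 := by omega
  exact SimpleGraph.Walk.eq_of_length_eq_zero h0

section GeoBR
variable [Fintype V] {Geo : Set V}

lemma lemBR (hT : IsDitree T)
    (hypL : ∀ ℓ, IsLeaf T ℓ → ℓ ∈ Geo)
    (hypS : ∀ S : Set V, (IsSourceSet T S ∨ IsSinkSet T S) → (∀ v ∈ S, ¬ IsLeaf T v) →
      ∃ g ∈ Geo, g ∈ S)
    {x m : V} (hadj : (underlying T).Adj m x) :
    ∃ g ∈ Geo, ArrivesVia hT g x m ∨ LeavesVia hT x g m := by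
  by_cases hmx : T m x <;> by_cases hxm : T x m
  rotate_left
  -- case T m x, ¬ T x m
  · obtain ⟨g, hg, hgr⟩ := lemF hT hypL hypS m
    refine ⟨g, hg, Or.inl ⟨hgr.trans (Relation.ReflTransGen.single hmx), hadj, ?_⟩⟩
    intro hc
    exact hxm (arc_of_reach_adj hT (reach_suffix hT hgr hc) hadj.symm)
  -- case ¬ T m x, T x m
  · obtain ⟨g, hg, hgr⟩ := lemF' hT hypL hypS m
    refine ⟨g, hg, Or.inr ⟨(Relation.ReflTransGen.single hxm).trans hgr, hadj.symm, ?_⟩⟩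
    intro hc
    exact hmx (arc_of_reach_adj hT (reach_prefix hT hgr hc) hadj)
  -- case neither: contradiction
  · rcases hadj.2 with h | h
    · exact absurd h hmx
    · exact absurd h hxm
  -- main case: both arcs
  · have hmC : m ∈ MSCC T x :=
      ⟨Relation.ReflTransGen.single hxm, Relation.ReflTransGen.single hmx⟩
    set C := MSCC T x with hCdef
    set S' := {z | z ∈ C ∧ x ∉ (tpath hT z m).support} with hS'def
    have hmS' : m ∈ S' := by
      refine ⟨hmC, ?_⟩
      rw [tpath_self]
      simp only [SimpleGraph.Walk.support_nil, List.mem_singleton]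
      exact hadj.ne'
    by_cases hleaf : ∃ ℓ ∈ S', IsLeaf T ℓ
    · obtain ⟨ℓ, hℓS, hℓ⟩ := hleaf
      exact ⟨ℓ, hypL ℓ hℓ, Or.inl ⟨hℓS.1.2, hadj, hℓS.2⟩⟩
    by_cases hii : ∃ w c, c ∈ S' ∧ T w c ∧ w ∉ C
    · obtain ⟨w, c, hcS, harc, hwC⟩ := hii
      have hwx : Reach T w x := (Relation.ReflTransGen.single harc).trans hcS.1.2
      have hnxw : ¬ Reach T x w := fun h => hwC ⟨h, hwx⟩
      obtain ⟨g, hg, hgr⟩ := lemF hT hypL hypS w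
      refine ⟨g, hg, Or.inl ⟨hgr.trans hwx, hadj, ?_⟩⟩
      intro hc
      rcases tpath_triangle hT g w m hc with h | h
      · exact hnxw (reach_suffix hT hgr h)
      · rcases tpath_adj_left hT (adj_of_arc hT harc) h with h' | h'
        · exact hwC (h' ▸ mem_mscc_self T x)
        · exact hcS.2 h'
    by_cases hii' : ∃ w c, c ∈ S' ∧ T c w ∧ w ∉ C
    · obtain ⟨w, c, hcS, harc, hwC⟩ := hii'
      have hxw : Reach T x w := hcS.1.1.trans (Relation.ReflTransGen.single harc)
      have hnwx : ¬ Reach T w x := fun h => hwC ⟨hxw, h⟩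
      obtain ⟨g, hg, hgr⟩ := lemF' hT hypL hypS w
      refine ⟨g, hg, Or.inr ⟨hxw.trans hgr, hadj.symm, ?_⟩⟩
      intro hc
      rcases tpath_triangle hT m w g hc with h | h
      · have h2 := mem_tpath_symm hT h
        rcases tpath_adj_left hT (adj_of_arc hT harc).symm h2 with h' | h'
        · exact hwC (h' ▸ mem_mscc_self T x)
        · exact hcS.2 h'
      · exact hnwx (reach_prefix hT hgr h)
    -- impossible case
    · exfalso
      push_neg at hleaf hii hii'
      obtain ⟨z, hzS, hmax⟩ := Set.exists_max_image S' (fun z => (tpath hT x z).length)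
        (Set.toFinite _) ⟨m, hmS'⟩
      have hzx : z ≠ x := by
        intro he; subst he
        exact hzS.2 (SimpleGraph.Walk.start_mem_support _)
      obtain ⟨pz, hpadj, hznotin, hconcat⟩ := exists_penult hT hzx
      have hnb : ∀ y, (underlying T).Adj z y → y = pz := by
        intro y hyadj
        by_cases hy : y ∈ (tpath hT x z).support
        · exact penult_unique hT hpadj hznotin hconcat hyadj.symm hy
        · exfalso
          have hxy : tpath hT x y = (tpath hT x z).concat hyadj := tpath_concat hT hyadj hy
          have hyC : y ∈ C := by
            rcases hyadj.2 with harc | harc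
            · exact hii' y z hzS harc
            · exact hii y z hzS harc
          have hyS : y ∈ S' := by
            refine ⟨hyC, ?_⟩
            intro hc
            rcases tpath_adj_left hT hyadj.symm hc with h' | h'
            · exact hy (h' ▸ SimpleGraph.Walk.start_mem_support (tpath hT x z))
            · exact hzS.2 h'
          have := hmax y hyS
          rw [hxy, SimpleGraph.Walk.length_concat] at this
          omega
      have hpz_mem : pz ∈ (underlying T).neighborSet z := hpadj.symm
      have hsub : (underlying T).neighborSet z ⊆ {pz} := by
        intro y hy
        exact hnb y hy
      have heq : (underlying T).neighborSet z = {pz} :=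
        Set.Subset.antisymm hsub (by simp [Set.singleton_subset_iff]; exact hpz_mem)
      exact hleaf z hzS (by rw [IsLeaf, heq]; simp)

section Lower
variable {S : Set V}

lemma walk_head_mem {S : Set V} (hclosed : ∀ u v, v ∈ S → T u v → u ∈ S) :
    ∀ p : List V, p.Chain' T → ∀ x ∈ p, x ∈ S → ∀ u ∈ p.head?, u ∈ S := by
  intro p
  induction p with
  | nil => intro _ x hx; simp at hx
  | cons a rest ih =>
    intro hc x hx hxS u hu
    simp at hu; subst hu
    rcases List.mem_cons.mp hx with rfl | hx'
    · exact hxS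
    · cases rest with
      | nil => simp at hx'
      | cons b rest' =>
        simp only [List.Chain', List.isChain_cons_cons] at hc
        have hb : b ∈ S := ih hc.2 x hx' hxS b rfl
        exact hclosed a b hb hc.1

lemma walk_last_mem {S : Set V} (hclosed : ∀ u v, u ∈ S → T u v → v ∈ S) :
    ∀ p : List V, p.Chain' T → ∀ x ∈ p, x ∈ S → ∀ v ∈ p.getLast?, v ∈ S := by
  intro p hc x hx hxS v hv
  have hc' : p.reverse.Chain' (flip T) := by
    simp only [List.Chain', List.isChain_reverse]
    exact hc
  have hx' : x ∈ p.reverse := by simpa using hx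
  have hv' : v ∈ p.reverse.head? := by rwa [List.head?_reverse]
  exact walk_head_mem (fun u w hw hT' => hclosed w u hw hT') p.reverse hc' x hx' hxS v hv'

lemma source_set_head (hS : IsSourceSet T S) {x u v : V} (hxS : x ∈ S)
    (hx : x ∈ interval T u v) : u ∈ S := by
  obtain ⟨p, hw, _, hxp⟩ := hx
  exact walk_head_mem (fun a b hb h => hS.2 a b hb h) p hw.1 x hxp hxS u hw.2.1

lemma sink_set_last (hS : IsSinkSet T S) {x u v : V} (hxS : x ∈ S)
    (hx : x ∈ interval T u v) : v ∈ S := by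
  obtain ⟨p, hw, _, hxp⟩ := hx
  exact walk_last_mem (fun a b ha h => hS.2 a b ha h) p hw.1 x hxp hxS v hw.2.2

lemma scc_disjoint {S₁ S₂ : Set V} (h₁ : IsSCC T S₁) (h₂ : IsSCC T S₂)
    (hne : S₁ ≠ S₂) : Disjoint S₁ S₂ := by
  rw [Set.disjoint_left]
  intro y hy1 hy2
  apply hne
  have hreach : ∀ u ∈ S₁ ∪ S₂, ∀ v ∈ S₁ ∪ S₂, Reach T u v := by
    intro u hu v hv
    have h1 : ∀ w ∈ S₁ ∪ S₂, Reach T w y ∧ Reach T y w := by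
      intro w hw
      rcases hw with hw | hw
      · exact ⟨h₁.2.1 w hw y hy1, h₁.2.1 y hy1 w hw⟩
      · exact ⟨h₂.2.1 w hw y hy2, h₂.2.1 y hy2 w hw⟩
    exact ((h1 u hu).1).trans (h1 v hv).2
  have hs1 : S₁ ∪ S₂ ⊆ S₁ := h₁.2.2 _ Set.subset_union_left hreach
  have hs2 : S₁ ∪ S₂ ⊆ S₂ := h₂.2.2 _ Set.subset_union_right hreach
  exact Set.Subset.antisymm (fun a ha => hs2 (Or.inl ha)) (fun a ha => hs1 (Or.inr ha))

lemma leaf_endpoint (hT : IsDitree T) {x u v : V} (hleaf : IsLeaf T x)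
    (hx : x ∈ interval T u v) : x = u ∨ x = v := by
  by_contra hcon
  push_neg at hcon
  obtain ⟨hxu, hxv⟩ := hcon
  obtain ⟨p, hw, hmin, hxp⟩ := hx
  obtain ⟨s, t, rfl⟩ := List.append_of_mem hxp
  -- s nonempty
  rcases List.eq_nil_or_concat s with rfl | ⟨s', a, rfl⟩
  · apply hxu
    have := hw.2.1
    simp at this
    first | exact this | exact this.symm
  simp only [List.concat_eq_append] at hw hmin hxp
  -- t nonempty
  rcases t with _ | ⟨b, t'⟩
  · apply hxv
    have h := hw.2.2
    rw [List.getLast?_concat] at h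
    simpa using h
  -- now p = s' ++ a :: x :: b :: t'
  have hp : (s' ++ [a]) ++ x :: b :: t' = s' ++ a :: x :: b :: t' := by
    simp
  have hchain := hw.1
  rw [hp] at hchain
  simp only [List.Chain', List.isChain_append] at hchain
  obtain ⟨hs', hrest, hlink⟩ := hchain
  rw [List.isChain_cons_cons] at hrest
  obtain ⟨hax, hrest⟩ := hrest
  rw [List.isChain_cons_cons] at hrest
  obtain ⟨hxb, hbt⟩ := hrest
  -- a and b are neighbors of x, so a = b
  obtain ⟨w, hwnbr⟩ := Set.ncard_eq_one.mp hleaf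
  have haw : a = w := by
    have : a ∈ (underlying T).neighborSet x := (adj_of_arc hT hax).symm
    rwa [hwnbr, Set.mem_singleton_iff] at this
  have hbw : b = w := by
    have : b ∈ (underlying T).neighborSet x := adj_of_arc hT hxb
    rwa [hwnbr, Set.mem_singleton_iff] at this
  have hab : a = b := haw.trans hbw.symm
  subst hab
  -- shorter walk
  set q := s' ++ a :: t' with hq
  have hwq : IsWalk T u v q := by
    refine ⟨?_, ?_, ?_⟩
    · rw [hq]
      simp only [List.Chain', List.isChain_append]
      refine ⟨hs', ?_, ?_⟩
      · rw [List.isChain_cons]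
        refine ⟨?_, ?_⟩
        · intro y hy
          rcases t' with _ | ⟨c, t''⟩
          · simp at hy
          · simp at hy; subst hy
            rw [List.isChain_cons_cons] at hbt
            exact hbt.1
        · rcases t' with _ | ⟨c, t''⟩
          · simp
          · rw [List.isChain_cons_cons] at hbt
            exact hbt.2
      · intro y hy z hz
        simp at hz; subst hz
        exact hlink y hy a rfl
    · have h1 : ((s' ++ [a]) ++ x :: a :: t').head? = (s' ++ a :: x :: a :: t').head? := by
        rw [hp]
      have h2 : (s' ++ a :: x :: a :: t').head? = (s' ++ a :: t').head? := by
        rcases s' with _ | ⟨d, s''⟩ <;> simp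
      rw [hq, ← h2, ← hp, hw.2.1]
    · rcases List.eq_nil_or_concat t' with rfl | ⟨t'', c, rfl⟩
      · have h1 : ((s' ++ [a]) ++ [x, a]).getLast? = some a := by
          have he : (s' ++ [a]) ++ [x, a] = ((s' ++ [a]) ++ [x]) ++ [a] := by simp
          rw [he, List.getLast?_concat]
        have hv2 : some a = some v := by rw [← h1]; exact hw.2.2
        rw [hq]
        rw [List.getLast?_concat]
        exact hv2
      · have h1 : ((s' ++ [a]) ++ x :: a :: t'' ++ [c]).getLast? = some c := by
          have : (s' ++ [a]) ++ x :: a :: t'' ++ [c] = ((s' ++ [a]) ++ x :: a :: t'') ++ [c] := by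
             simp
          rw [this, List.getLast?_concat]
        have hv2 : some c = some v := by
          rw [← h1]
          have h3 := hw.2.2
          convert h3 using 2
          simp
        have h2 : (s' ++ a :: t'' ++ [c]).getLast? = some c := by
          have : s' ++ a :: t'' ++ [c] = (s' ++ a :: t'') ++ [c] := by simp
          rw [this, List.getLast?_concat]
        rw [hq]
        have he : s' ++ a :: t''.concat c = s' ++ a :: t'' ++ [c] := by simp
        rw [he, h2, hv2]
  have := hmin q hwq
  rw [hq] at this
  simp at this

end Lower
lemma mscc_of_source {x : V} (hno : ∀ w, ¬ T w x) : MSCC T x = {x} := by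
  ext y
  constructor
  · intro hy
    rcases Relation.ReflTransGen.cases_tail hy.2 with h | ⟨c, _, hc⟩
    · exact h ▸ rfl
    · exact absurd hc (hno c)
  · rintro rfl
    exact mem_mscc_self T _

lemma mscc_of_sink {x : V} (hno : ∀ w, ¬ T x w) : MSCC T x = {x} := by
  ext y
  constructor
  · intro hy
    rcases Relation.ReflTransGen.cases_head hy.1 with h | ⟨c, hc, _⟩
    · exact h ▸ rfl
    · exact absurd hc (hno c)
  · rintro rfl
    exact mem_mscc_self T _

lemma lemU (hT : IsDitree T) (hcard : 2 ≤ Fintype.card V)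
    (hypL : ∀ ℓ, IsLeaf T ℓ → ℓ ∈ Geo)
    (hypS : ∀ S : Set V, (IsSourceSet T S ∨ IsSinkSet T S) → (∀ v ∈ S, ¬ IsLeaf T v) →
      ∃ g ∈ Geo, g ∈ S) :
    IsGeodetic T Geo := by
  intro x
  by_cases hxG : x ∈ Geo
  · exact ⟨x, hxG, x, hxG, mem_interval_self hT x⟩
  have hnl : ¬ IsLeaf T x := fun h => hxG (hypL x h)
  -- x has an in-arc
  have hin : ∃ p, T p x := by
    by_contra hno
    push_neg at hno
    have hm : MSCC T x = {x} := mscc_of_source hno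
    have hss : IsSourceSet T (MSCC T x) := by
      refine ⟨mscc_isSCC T x, ?_⟩
      intro u w hw harc
      rw [hm] at hw
      exact absurd (hw ▸ harc) (hno u)
    obtain ⟨g, hg, hgm⟩ := geo_of_scc hT hypL hypS (Or.inl hss)
    rw [hm] at hgm
    exact hxG (hgm ▸ hg)
  have hout : ∃ q, T x q := by
    by_contra hno
    push_neg at hno
    have hm : MSCC T x = {x} := mscc_of_sink hno
    have hss : IsSinkSet T (MSCC T x) := by
      refine ⟨mscc_isSCC T x, ?_⟩
      intro u w hu harc
      rw [hm] at hu
      exact absurd (hu ▸ harc) (hno w)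
    obtain ⟨g, hg, hgm⟩ := geo_of_scc hT hypL hypS (Or.inr hss)
    rw [hm] at hgm
    exact hxG (hgm ▸ hg)
  obtain ⟨u₀, hu₀G, hu₀r⟩ := lemF hT hypL hypS x
  obtain ⟨v₀, hv₀G, hv₀r⟩ := lemF' hT hypL hypS x
  have hu₀x : u₀ ≠ x := fun he => hxG (he ▸ hu₀G)
  have hxv₀ : x ≠ v₀ := fun he => hxG (he ▸ hv₀G)
  obtain ⟨a, hA⟩ := exists_arrivesVia hT hu₀r hu₀x
  obtain ⟨b, hB⟩ := exists_leavesVia hT hv₀r hxv₀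
  by_cases hab : a ≠ b
  · exact ⟨u₀, hu₀G, v₀, hv₀G, mem_interval_of_via hT hA hB hab⟩
  push_neg at hab
  subst hab
  -- find another neighbor m ≠ a
  have haN : a ∈ (underlying T).neighborSet x := hA.2.1.symm
  have hm : ∃ m ∈ (underlying T).neighborSet x, m ≠ a := by
    by_contra hno
    push_neg at hno
    apply hnl
    have : (underlying T).neighborSet x = {a} :=
      Set.Subset.antisymm (fun y hy => hno y hy) (by simpa using haN)
    rw [IsLeaf, this]
    simp
  obtain ⟨m, hmN, hma⟩ := hm
  have hmadj : (underlying T).Adj m x := (by exact hmN : (underlying T).Adj x m).symm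
  obtain ⟨g, hgG, hgvia⟩ := lemBR hT hypL hypS hmadj
  rcases hgvia with hgvia | hgvia
  · exact ⟨g, hgG, v₀, hv₀G, mem_interval_of_via hT hgvia hB hma⟩
  · exact ⟨u₀, hu₀G, g, hgG, mem_interval_of_via hT hA hgvia (fun he => hma he.symm)⟩

end GeoBR
end Aux




/-- Let `T` be a ditree with at least two vertices, `L` its
set of leaves and `t` the number of source sets and sink sets of `T`
containing no leaf. Then the geodetic number of `T` equals `|L| + t`. -/
theorem geodetic_number_of_ditree [Fintype V] (T : V → V → Prop)
    (hT : IsDitree T) (hcard : 2 ≤ Fintype.card V) :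
    sInf {k | ∃ S : Set V, IsGeodetic T S ∧ S.ncard = k} =
      {v | IsLeaf T v}.ncard +
      {S : Set V | (IsSourceSet T S ∨ IsSinkSet T S) ∧
        ∀ v ∈ S, ¬ IsLeaf T v}.ncard := by
  classical
  haveI : Nonempty V := Fintype.card_pos_iff.mp (by omega)
  set L : Set V := {v | IsLeaf T v} with hL
  set SS : Set (Set V) :=
    {S : Set V | (IsSourceSet T S ∨ IsSinkSet T S) ∧ ∀ v ∈ S, ¬ IsLeaf T v} with hSS
  have hSne : ∀ S ∈ SS, S.Nonempty := by
    intro S hS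
    rcases hS.1 with h | h
    · exact h.1.1
    · exact h.1.1
  have hSne2 := hSne
  choose! rep hrep using hSne2
  set Geo : Set V := L ∪ rep '' SS with hGeo
  have hypL : ∀ ℓ, IsLeaf T ℓ → ℓ ∈ Geo := fun ℓ h => Or.inl h
  have hypS : ∀ S : Set V, (IsSourceSet T S ∨ IsSinkSet T S) → (∀ v ∈ S, ¬ IsLeaf T v) →
      ∃ g ∈ Geo, g ∈ S := by
    intro S h1 h2
    have hS : S ∈ SS := ⟨h1, h2⟩
    exact ⟨rep S, Or.inr ⟨S, hS, rfl⟩, hrep S hS⟩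
  have hgeo : IsGeodetic T Geo := lemU hT hcard hypL hypS
  have hub : Geo.ncard ≤ L.ncard + SS.ncard := by
    refine (Set.ncard_union_le _ _).trans ?_
    exact Nat.add_le_add_left (Set.ncard_image_le (Set.toFinite SS)) _
  have hlb : ∀ G' : Set V, IsGeodetic T G' → L.ncard + SS.ncard ≤ G'.ncard := by
    intro G' hG'
    have hLsub : L ⊆ G' := by
      intro ℓ hℓ
      obtain ⟨u, hu, v, hv, hin⟩ := hG' ℓ
      rcases leaf_endpoint hT hℓ hin with rfl | rfl
      · exact hu
      · exact hv
    have hpick : ∀ S, S ∈ SS → ∃ g, g ∈ G' ∧ g ∈ S := by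
      intro S hS
      obtain ⟨x, hx⟩ := hSne S hS
      obtain ⟨u, hu, v, hv, hin⟩ := hG' x
      rcases hS.1 with h | h
      · exact ⟨u, hu, source_set_head h hx hin⟩
      · exact ⟨v, hv, sink_set_last h hx hin⟩
    choose! pick hpickG hpickS using hpick
    have hinj : Set.InjOn pick SS := by
      intro S1 h1 S2 h2 he
      by_contra hne
      have hd := scc_disjoint (h1.1.elim (fun h => h.1) (fun h => h.1))
                              (h2.1.elim (fun h => h.1) (fun h => h.1)) hne
      exact (Set.disjoint_left.mp hd (hpickS S1 h1)) (he ▸ hpickS S2 h2)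
    have himg : pick '' SS ⊆ G' \ L := by
      rintro g ⟨S, hS, rfl⟩
      exact ⟨hpickG S hS, fun hgL => hS.2 _ (hpickS S hS) hgL⟩
    have hdisj : Disjoint L (pick '' SS) := by
      rw [Set.disjoint_left]
      intro y hyL hyI
      exact (himg hyI).2 hyL
    calc L.ncard + SS.ncard = L.ncard + (pick '' SS).ncard := by
          rw [Set.ncard_image_of_injOn hinj]
      _ = (L ∪ pick '' SS).ncard :=
          (Set.ncard_union_eq hdisj (Set.toFinite _) (Set.toFinite _)).symm
      _ ≤ G'.ncard := by
          apply Set.ncard_le_ncard ?_ (Set.toFinite _)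
          intro y hy
          rcases hy with hy | hy
          · exact hLsub hy
          · exact (himg hy).1
  have hmem : Geo.ncard ∈ {k | ∃ S : Set V, IsGeodetic T S ∧ S.ncard = k} :=
    ⟨Geo, hgeo, rfl⟩
  apply le_antisymm
  · exact (Nat.sInf_le hmem).trans hub
  · refine le_csInf ⟨Geo.ncard, hmem⟩ ?_
    rintro k ⟨S2, hS2, rfl⟩
    exact hlb S2 hS2



end GeoPaper
end
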